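/- arXiv:1603.06517 — 3 statements merged into one kernel-verified Lean document; each statement's English description precedes it below -/
import Mathlib

section
/- Let q = 1 and α = π²/2. For every A ∈ [0,1], the function y_A(x) = (A/2)(1 + cos(πx)) − √(1−A)·sin(πx) is a minimizer of λ(π²/2, 1) = π² and satisfies ∫_{−1}^{1} y_A(x) dx = A. In particular λ(π²/2,1) admits a positive minimizer (the case A = 1), and for each A ∈ (0,1) it admits a minimizer which changes sign in (−1,1) at a point x̄ ≠ 0 and has nonzero average ∫_{−1}^{1} y_A dx = A ≠ 0. -/
open MeasureTheory Real Filter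

noncomputable section

/-- `u ∈ H¹₀(-1,1)` with (weak) derivative `g`: `u` is absolutely continuous on `[-1,1]`
(being the indefinite integral of the integrable function `g`), vanishes at both endpoints,
and `g ∈ L²(-1,1)`. -/
def IsH10 (u g : ℝ → ℝ) : Prop :=
  IntervalIntegrable g volume (-1) 1 ∧
  MemLp g 2 (volume.restrict (Set.Ioo (-1 : ℝ) 1)) ∧
  (∀ x ∈ Set.Icc (-1 : ℝ) 1, u x = ∫ t in (-1 : ℝ)..x, g t) ∧
  u 1 = 0

/-- `u` is not identically zero on `[-1,1]`. -/
def Nontriv (u : ℝ → ℝ) : Prop := ∃ x ∈ Set.Icc (-1 : ℝ) 1, u x ≠ 0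

/-- The Rayleigh-type quotient `Q[u,α]` (with `g = u'`). -/
def Qfun (α q : ℝ) (u g : ℝ → ℝ) : ℝ :=
  ((∫ x in (-1 : ℝ)..1, (g x) ^ 2) +
      α * |∫ x in (-1 : ℝ)..1, |u x| ^ (q - 1) * u x| ^ (2 / q)) /
    ∫ x in (-1 : ℝ)..1, (u x) ^ 2

/-- `λ(α,q) = inf { Q[u,α] : u ∈ H¹₀(-1,1), u ≢ 0 }`. -/
def lam (α q : ℝ) : ℝ :=
  sInf {v : ℝ | ∃ u g : ℝ → ℝ, IsH10 u g ∧ Nontriv u ∧ Qfun α q u g = v}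

/-- `u` (with derivative `g`) is a minimizer for `λ(α,q)`. -/
def IsMinimizer (α q : ℝ) (u g : ℝ → ℝ) : Prop :=
  IsH10 u g ∧ Nontriv u ∧ Qfun α q u g = lam α q

/-- The critical value `α_q = sup { α : λ(α,q) < π² }`. -/
def alphaCrit (q : ℝ) : ℝ := sSup {α : ℝ | lam α q < π ^ 2}

/-- The family of minimizers for `q = 1`, `α = π²/2`. -/
def yA (A : ℝ) : ℝ → ℝ := fun x => A / 2 * (1 + Real.cos (π * x)) - Real.sqrt (1 - A) * Real.sin (π * x)

/-- The derivative of `yA`. -/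
def gA (A : ℝ) : ℝ → ℝ := fun x => -(A / 2) * π * Real.sin (π * x) - Real.sqrt (1 - A) * π * Real.cos (π * x)

namespace Stmt3Aux


lemma hd_sin (x : ℝ) : HasDerivAt (fun y => Real.sin (π*y)) (π * Real.cos (π*x)) x := by
  have h := (Real.hasDerivAt_sin (π*x)).comp x ((hasDerivAt_id x).const_mul π)
  simp only [Function.comp_def, id_eq] at h
  exact h.congr_deriv (by ring)

lemma hd_cos (x : ℝ) : HasDerivAt (fun y => Real.cos (π*y)) (-(π * Real.sin (π*x))) x := by
  have h := (Real.hasDerivAt_cos (π*x)).comp x ((hasDerivAt_id x).const_mul π)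
  simp only [Function.comp_def, id_eq] at h
  exact h.congr_deriv (by ring)

lemma hd_sin2 (x : ℝ) : HasDerivAt (fun y => Real.sin (2*π*y)) (2*π * Real.cos (2*π*x)) x := by
  have h := (Real.hasDerivAt_sin (2*π*x)).comp x ((hasDerivAt_id x).const_mul (2*π))
  simp only [Function.comp_def, id_eq] at h
  exact h.congr_deriv (by ring)

lemma cont_sin : Continuous (fun x => Real.sin (π*x)) := by fun_prop

lemma cont_cos : Continuous (fun x => Real.cos (π*x)) := by fun_prop

lemma integral_cos_pi : ∫ x in (-1:ℝ)..1, Real.cos (π*x) = 0 := by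
  have h : ∀ x ∈ Set.uIcc (-1:ℝ) 1, HasDerivAt (fun y => Real.sin (π*y) / π) (Real.cos (π*x)) x := by
    intro x _
    have := (hd_sin x).div_const π
    simpa [mul_div_assoc, mul_div_cancel_left₀ _ (Real.pi_ne_zero)] using this
  rw [intervalIntegral.integral_eq_sub_of_hasDerivAt h (cont_cos.intervalIntegrable _ _)]
  simp

lemma integral_sin_pi : ∫ x in (-1:ℝ)..1, Real.sin (π*x) = 0 := by
  have h : ∀ x ∈ Set.uIcc (-1:ℝ) 1, HasDerivAt (fun y => -(Real.cos (π*y) / π)) (Real.sin (π*x)) x := by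
    intro x _
    have := ((hd_cos x).div_const π).neg
    exact this.congr_deriv (by field_simp)
  rw [intervalIntegral.integral_eq_sub_of_hasDerivAt h (cont_sin.intervalIntegrable _ _)]
  simp

lemma integral_pi_sin_pi : ∫ x in (-1:ℝ)..1, π * Real.sin (π*x) = 0 := by
  rw [intervalIntegral.integral_const_mul, integral_sin_pi, mul_zero]

lemma integral_cos_sq_pi : ∫ x in (-1:ℝ)..1, Real.cos (π*x)^2 = 1 := by
  have h : ∀ x ∈ Set.uIcc (-1:ℝ) 1,
      HasDerivAt (fun y => y/2 + Real.sin (2*π*y) / (4*π)) (Real.cos (π*x)^2) x := by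
    intro x _
    have h1 := ((hasDerivAt_id x).div_const 2).add ((hd_sin2 x).div_const (4*π))
    have h2 : (1:ℝ)/2 + 2*π*Real.cos (2*π*x) / (4*π) = Real.cos (π*x)^2 := by
      rw [Real.cos_sq (π*x)]
      have : 2*(π*x) = 2*π*x := by ring
      rw [this]
      field_simp
      ring
    rw [← h2]
    exact h1
  rw [intervalIntegral.integral_eq_sub_of_hasDerivAt h ((cont_cos.pow 2).intervalIntegrable _ _)]
  have h1 : Real.sin (2*π*(1:ℝ)) = 0 := by simpa using Real.sin_two_pi
  have h2 : Real.sin (2*π*(-1:ℝ)) = 0 := by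
    rw [mul_neg_one, Real.sin_neg]
    simpa using Real.sin_two_pi
  rw [h1, h2]
  norm_num

lemma integral_sin_sq_pi : ∫ x in (-1:ℝ)..1, Real.sin (π*x)^2 = 1 := by
  have h : ∀ x ∈ Set.uIcc (-1:ℝ) 1, Real.sin (π*x)^2 = 1 - Real.cos (π*x)^2 := by
    intro x _
    have := Real.sin_sq_add_cos_sq (π*x); linarith
  rw [intervalIntegral.integral_congr h, intervalIntegral.integral_sub (g := fun x => Real.cos (π*x)^2)
    intervalIntegrable_const ((cont_cos.pow 2).intervalIntegrable _ _), integral_cos_sq_pi]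
  simp

lemma integral_sin_cos_pi : ∫ x in (-1:ℝ)..1, Real.sin (π*x) * Real.cos (π*x) = 0 := by
  have h : ∀ x ∈ Set.uIcc (-1:ℝ) 1,
      HasDerivAt (fun y => Real.sin (π*y)^2 / (2*π)) (Real.sin (π*x) * Real.cos (π*x)) x := by
    intro x _
    have h1 := (((hd_sin x).pow 2).div_const (2*π))
    exact h1.congr_deriv (by field_simp; ring)
  rw [intervalIntegral.integral_eq_sub_of_hasDerivAt h
    ((cont_sin.mul cont_cos).intervalIntegrable _ _)]
  simp



lemma int6 (c1 c2 c3 c4 c5 c6 : ℝ) :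
    ∫ x in (-1:ℝ)..1, (c1 + c2*Real.cos (π*x) + c3*Real.cos (π*x)^2 + c4*Real.sin (π*x)
      + c5*(Real.sin (π*x)*Real.cos (π*x)) + c6*Real.sin (π*x)^2) = 2*c1 + c3 + c6 := by
  have i1 : IntervalIntegrable (fun _ : ℝ => c1) volume (-1) 1 := intervalIntegrable_const
  have i2 : IntervalIntegrable (fun x : ℝ => c2*Real.cos (π*x)) volume (-1) 1 :=
    (Continuous.intervalIntegrable (by fun_prop) _ _)
  have i3 : IntervalIntegrable (fun x : ℝ => c3*Real.cos (π*x)^2) volume (-1) 1 :=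
    (Continuous.intervalIntegrable (by fun_prop) _ _)
  have i4 : IntervalIntegrable (fun x : ℝ => c4*Real.sin (π*x)) volume (-1) 1 :=
    (Continuous.intervalIntegrable (by fun_prop) _ _)
  have i5 : IntervalIntegrable (fun x : ℝ => c5*(Real.sin (π*x)*Real.cos (π*x))) volume (-1) 1 :=
    (Continuous.intervalIntegrable (by fun_prop) _ _)
  have i6 : IntervalIntegrable (fun x : ℝ => c6*Real.sin (π*x)^2) volume (-1) 1 :=
    (Continuous.intervalIntegrable (by fun_prop) _ _)
  rw [intervalIntegral.integral_add (((((i1.add i2).add i3).add i4)).add i5) i6,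
      intervalIntegral.integral_add ((((i1.add i2).add i3)).add i4) i5,
      intervalIntegral.integral_add (((i1.add i2).add i3)) i4,
      intervalIntegral.integral_add ((i1.add i2)) i3,
      intervalIntegral.integral_add i1 i2,
      intervalIntegral.integral_const_mul, intervalIntegral.integral_const_mul,
      intervalIntegral.integral_const_mul, intervalIntegral.integral_const_mul,
      intervalIntegral.integral_const_mul,
      integral_cos_pi, integral_sin_pi, integral_cos_sq_pi, integral_sin_sq_pi,
      integral_sin_cos_pi, intervalIntegral.integral_const]
  norm_num

lemma hd_yA (A : ℝ) (x : ℝ) : HasDerivAt (yA A) (gA A x) x := by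
  unfold yA gA
  have h := (((hd_cos x).const_add 1).const_mul (A/2)).sub ((hd_sin x).const_mul (Real.sqrt (1-A)))
  exact h.congr_deriv (by ring)

lemma yA_neg_one (A : ℝ) : yA A (-1) = 0 := by
  unfold yA
  rw [mul_neg_one, Real.cos_neg, Real.sin_neg, Real.cos_pi, Real.sin_pi]
  ring

lemma yA_one (A : ℝ) : yA A 1 = 0 := by
  unfold yA
  rw [mul_one, Real.cos_pi, Real.sin_pi]
  ring

lemma cont_gA (A : ℝ) : Continuous (gA A) := by unfold gA; fun_prop

lemma cont_yA (A : ℝ) : Continuous (yA A) := by unfold yA; fun_prop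

lemma yA_eq_int (A : ℝ) : ∀ x ∈ Set.Icc (-1:ℝ) 1, yA A x = ∫ t in (-1:ℝ)..x, gA A t := by
  intro x _
  rw [intervalIntegral.integral_eq_sub_of_hasDerivAt (fun t _ => hd_yA A t)
    ((cont_gA A).intervalIntegrable _ _), yA_neg_one, sub_zero]

lemma integral_yA (A : ℝ) : ∫ x in (-1:ℝ)..1, yA A x = A := by
  have h : ∀ x ∈ Set.uIcc (-1:ℝ) 1, yA A x = A/2 + (A/2)*Real.cos (π*x) + 0*Real.cos (π*x)^2
      + (-(Real.sqrt (1-A)))*Real.sin (π*x) + 0*(Real.sin (π*x)*Real.cos (π*x)) + 0*Real.sin (π*x)^2 := by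
    intro x _; unfold yA; ring
  rw [intervalIntegral.integral_congr h, int6]
  ring

lemma integral_gA_sq (A : ℝ) (hA : A ≤ 1) :
    ∫ x in (-1:ℝ)..1, gA A x ^ 2 = π^2 * (A^2/4 + 1 - A) := by
  set B := Real.sqrt (1-A) with hB
  have hB2 : B^2 = 1 - A := Real.sq_sqrt (by linarith)
  have h : ∀ x ∈ Set.uIcc (-1:ℝ) 1, gA A x ^2 = 0 + 0*Real.cos (π*x) + (B^2*π^2)*Real.cos (π*x)^2
      + 0*Real.sin (π*x) + (A*B*π^2)*(Real.sin (π*x)*Real.cos (π*x)) + (A^2/4*π^2)*Real.sin (π*x)^2 := by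
    intro x _; unfold gA; rw [← hB]; ring
  rw [intervalIntegral.integral_congr h, int6, hB2]
  ring

lemma integral_yA_sq (A : ℝ) (hA : A ≤ 1) :
    ∫ x in (-1:ℝ)..1, yA A x ^ 2 = 3*A^2/4 + 1 - A := by
  set B := Real.sqrt (1-A) with hB
  have hB2 : B^2 = 1 - A := Real.sq_sqrt (by linarith)
  have h : ∀ x ∈ Set.uIcc (-1:ℝ) 1, yA A x ^2 = A^2/4 + (A^2/2)*Real.cos (π*x)
      + (A^2/4)*Real.cos (π*x)^2 + (-(A*B))*Real.sin (π*x)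
      + (-(A*B))*(Real.sin (π*x)*Real.cos (π*x)) + (B^2)*Real.sin (π*x)^2 := by
    intro x _; unfold yA; rw [← hB]; ring
  rw [intervalIntegral.integral_congr h, int6, hB2]
  ring

lemma den_yA_pos (A : ℝ) (hA0 : 0 ≤ A) (hA : A ≤ 1) : 0 < 3*A^2/4 + 1 - A := by nlinarith



lemma yA_factor (A x : ℝ) :
    yA A x = Real.cos (π*x/2) * (A * Real.cos (π*x/2) - 2 * Real.sqrt (1-A) * Real.sin (π*x/2)) := by
  have hc : Real.cos (π*x) = 2 * Real.cos (π*x/2)^2 - 1 := by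
    have := Real.cos_sq (π*x/2)
    have h2 : 2*(π*x/2) = π*x := by ring
    rw [h2] at this
    linarith
  have hs : Real.sin (π*x) = 2 * Real.sin (π*x/2) * Real.cos (π*x/2) := by
    have := Real.sin_two_mul (π*x/2)
    have h2 : 2*(π*x/2) = π*x := by ring
    rw [h2] at this
    linarith
  unfold yA
  rw [hc, hs]
  ring

lemma half_mem (x : ℝ) (hx : x ∈ Set.Ioo (-1:ℝ) 1) : π*x/2 ∈ Set.Ioo (-(π/2)) (π/2) := by
  obtain ⟨h1, h2⟩ := hx
  constructor
  · nlinarith [Real.pi_pos]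
  · nlinarith [Real.pi_pos]

lemma yA_one_pos (x : ℝ) (hx : x ∈ Set.Ioo (-1:ℝ) 1) : 0 < yA 1 x := by
  have hc := Real.cos_pos_of_mem_Ioo (half_mem x hx)
  rw [yA_factor]
  norm_num
  nlinarith

lemma yA_sign (A : ℝ) (hA : A ∈ Set.Ioo (0:ℝ) 1) :
    ∃ x₀ ∈ Set.Ioo (-1:ℝ) 1, x₀ ≠ 0 ∧ yA A x₀ = 0 ∧
      (∃ a ∈ Set.Ioo (-1:ℝ) 1, 0 < yA A a) ∧
      (∃ b ∈ Set.Ioo (-1:ℝ) 1, yA A b < 0) ∧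
      (∫ x in (-1:ℝ)..1, yA A x) ≠ 0 := by
  obtain ⟨hA0, hA1⟩ := hA
  set B := Real.sqrt (1-A) with hBdef
  have hB : 0 < B := Real.sqrt_pos.mpr (by linarith)
  set r := A/(2*B) with hr
  have hrpos : 0 < r := by positivity
  set θ := Real.arctan r with hθ
  have hθpos : 0 < θ := by
    rw [hθ, ← Real.arctan_zero]
    exact Real.arctan_strictMono hrpos
  have hθlt : θ < π/2 := Real.arctan_lt_pi_div_two r
  set x₀ := 2*θ/π with hx₀
  have hπ := Real.pi_pos
  have hx₀pos : 0 < x₀ := by positivity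
  have hx₀lt : x₀ < 1 := by
    rw [hx₀, div_lt_one hπ]
    linarith
  have hhalf : π*x₀/2 = θ := by
    rw [hx₀]; field_simp
  have hcosθ := Real.cos_arctan_pos r
  rw [← hθ] at hcosθ
  have hsinθ : Real.sin θ = r * Real.cos θ := by
    rw [hθ, Real.sin_arctan, Real.cos_arctan]
    ring
  refine ⟨x₀, ⟨by linarith, hx₀lt⟩, ne_of_gt hx₀pos, ?_, ⟨0, by constructor <;> norm_num, ?_⟩, ?_, ?_⟩
  · rw [yA_factor, hhalf, ← hBdef, hsinθ, hr]
    field_simp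
    ring
  · unfold yA
    norm_num
    exact hA0
  · refine ⟨(x₀+1)/2, ⟨by linarith, by linarith⟩, ?_⟩
    set ψ := π*((x₀+1)/2)/2 with hψ
    have hψθ : θ < ψ := by
      rw [hψ, ← hhalf]
      rw [div_lt_div_iff₀ (by norm_num) (by norm_num)]
      nlinarith
    have hψlt : ψ < π/2 := by
      rw [hψ]
      rw [div_lt_div_iff₀ (by norm_num) (by norm_num)]
      nlinarith
    have hcosψ : 0 < Real.cos ψ := Real.cos_pos_of_mem_Ioo ⟨by linarith, hψlt⟩
    have htan : Real.tan θ < Real.tan ψ :=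
      Real.strictMonoOn_tan ⟨by linarith, by linarith⟩ ⟨by linarith, hψlt⟩ hψθ
    have htθ : Real.tan θ = r := by rw [hθ, Real.tan_arctan]
    have htψ : Real.tan ψ = Real.sin ψ / Real.cos ψ := Real.tan_eq_sin_div_cos ψ
    have hkey : A * Real.cos ψ - 2*B*Real.sin ψ < 0 := by
      rw [htθ, htψ, hr, div_lt_div_iff₀ (by positivity) hcosψ] at htan
      nlinarith
    rw [yA_factor, ← hψ, ← hBdef]
    exact mul_neg_of_pos_of_neg hcosψ hkey
  · rw [integral_yA]
    exact ne_of_gt hA0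



lemma fub {E : Type*} [NormedAddCommGroup E] [NormedSpace ℝ E] [CompleteSpace E]
    (g : ℝ → ℝ) (hgm : StronglyMeasurable g) (hg : IntervalIntegrable g volume (-1) 1)
    (ψ : ℝ → E) (hψ : Continuous ψ) :
    ∫ x in (-1:ℝ)..1, (∫ t in (-1:ℝ)..x, g t) • ψ x
      = ∫ t in (-1:ℝ)..1, g t • (∫ x in t..(1:ℝ), ψ x) := by
  have h11 : (-1:ℝ) ≤ 1 := by norm_num
  set μ := volume.restrict (Set.Ioc (-1:ℝ) 1) with hμ
  set K : ℝ → ℝ → E := fun x t => if t ≤ x then g t • ψ x else 0 with hK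
  -- integrability of uncurried K
  obtain ⟨C, hC⟩ := (isCompact_Icc (a := (-1:ℝ)) (b := 1)).exists_bound_of_continuousOn
    hψ.continuousOn
  have hC0 : ∀ x ∈ Set.Icc (-1:ℝ) 1, ‖ψ x‖ ≤ max C 0 := fun x hx => le_trans (hC x hx) (le_max_left _ _)
  have hgInt : Integrable g μ := by
    have := hg.1
    rwa [hμ]
  have hbound : Integrable (fun p : ℝ × ℝ => ‖g p.2‖ * max C 0) (μ.prod μ) := by
    have h1 : Integrable (fun t : ℝ => ‖g t‖ * max C 0) μ := (hgInt.norm).mul_const _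
    have h2 : Integrable (fun _ : ℝ => (1:ℝ)) μ := integrable_const 1
    have := h2.mul_prod h1
    simpa using this
  have hmeas : StronglyMeasurable (Function.uncurry K) := by
    apply StronglyMeasurable.ite (measurableSet_le measurable_snd measurable_fst)
    · exact (hgm.comp_measurable measurable_snd).smul (hψ.stronglyMeasurable.comp_measurable measurable_fst)
    · exact stronglyMeasurable_const
  have hKint : Integrable (Function.uncurry K) (μ.prod μ) := by
    refine hbound.mono' hmeas.aestronglyMeasurable ?_
    have hset : ∀ᵐ p : ℝ × ℝ ∂(μ.prod μ), p ∈ (Set.Ioc (-1:ℝ) 1) ×ˢ (Set.Ioc (-1:ℝ) 1) := by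
      rw [hμ, Measure.prod_restrict]
      exact ae_restrict_mem (measurableSet_Ioc.prod measurableSet_Ioc)
    filter_upwards [hset] with p hp
    obtain ⟨hp1, hp2⟩ := hp
    by_cases hle : p.2 ≤ p.1
    · have : Function.uncurry K p = g p.2 • ψ p.1 := by simp [hK, Function.uncurry, hle]
      rw [this, norm_smul]
      exact mul_le_mul_of_nonneg_left (hC0 _ (Set.mem_Icc_of_Ioc hp1)) (norm_nonneg _)
    · have : Function.uncurry K p = 0 := by simp [hK, Function.uncurry, hle]
      rw [this, norm_zero]
      positivity
  have swap := integral_integral_swap (f := K) hKint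
  -- identify LHS
  have hL : ∫ x in (-1:ℝ)..1, (∫ t in (-1:ℝ)..x, g t) • ψ x = ∫ x, (∫ t, K x t ∂μ) ∂μ := by
    rw [intervalIntegral.integral_of_le h11]
    refine (setIntegral_congr_fun measurableSet_Ioc fun x hx => ?_).symm
    have hx1 : x ≤ 1 := hx.2
    have hx2 : (-1:ℝ) ≤ x := le_of_lt hx.1
    have e1 : (fun t => K x t) = Set.indicator (Set.Iic x) (fun t => g t • ψ x) := by
      funext t
      rw [Set.indicator_apply]
      simp only [hK, Set.mem_Iic]
    rw [e1, hμ, setIntegral_indicator measurableSet_Iic, Set.Ioc_inter_Iic,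
      min_eq_right hx1, integral_smul_const, ← intervalIntegral.integral_of_le hx2]
  -- identify RHS
  have hR : ∫ t in (-1:ℝ)..1, g t • (∫ x in t..(1:ℝ), ψ x) = ∫ t, (∫ x, K x t ∂μ) ∂μ := by
    rw [intervalIntegral.integral_of_le h11]
    refine (setIntegral_congr_fun measurableSet_Ioc fun t ht => ?_).symm
    have ht1 : t ≤ 1 := ht.2
    have ht2 : (-1:ℝ) < t := ht.1
    have e1 : (fun x => K x t) = Set.indicator (Set.Ici t) (fun x => g t • ψ x) := by
      funext x
      rw [Set.indicator_apply]
      simp only [hK, Set.mem_Ici]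
    have e2 : Set.Ioc (-1:ℝ) 1 ∩ Set.Ici t = Set.Icc t 1 := by
      ext x
      simp only [Set.mem_inter_iff, Set.mem_Ioc, Set.mem_Ici, Set.mem_Icc]
      constructor
      · rintro ⟨⟨_, h2⟩, h3⟩; exact ⟨h3, h2⟩
      · rintro ⟨h1, h2⟩; exact ⟨⟨by linarith, h2⟩, h1⟩
    rw [e1, hμ, setIntegral_indicator measurableSet_Ici, e2, integral_smul,
      ← Measure.restrict_congr_set (Ioc_ae_eq_Icc (α := ℝ) (μ := volume)),
      ← intervalIntegral.integral_of_le ht1]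
  rw [hL, hR, swap]



abbrev neg1lt1 : (-1:ℝ) < 1 := by norm_num

lemma parseval₂ (f : ℝ → ℂ) (hfm : StronglyMeasurable f)
    (hL2 : MemLp f 2 (volume.restrict (Set.Ioc (-1:ℝ) 1))) :
    (∑' n : ℤ, ‖fourierCoeffOn neg1lt1 f n‖^2)
      = (1/2) * ∫ x in Set.Ioc (-1:ℝ) 1, ‖f x‖^2 ∧
    Summable (fun n : ℤ => ‖fourierCoeffOn neg1lt1 f n‖^2) := by
  haveI hT : Fact (0 < (1 - -1 : ℝ)) := ⟨by norm_num⟩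
  set T : ℝ := 1 - -1 with hTdef
  set F : AddCircle T → ℂ := AddCircle.liftIoc T (-1) f with hF
  have hIoc : Set.Ioc (-1:ℝ) (-1 + T) = Set.Ioc (-1:ℝ) 1 := by norm_num
  have hFm : StronglyMeasurable F := by
    have : F = f ∘ (fun y => ((AddCircle.measurableEquivIoc T (-1)) y : ℝ)) := rfl
    rw [this]
    exact hfm.comp_measurable (measurable_subtype_coe.comp (AddCircle.measurableEquivIoc T (-1)).measurable)
  have hcomp : ∀ x ∈ Set.Ioc (-1:ℝ) (-1 + T), F ((x : ℝ) : AddCircle T) = f x := fun x hx =>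
    AddCircle.liftIoc_coe_apply hx
  have hmap := (AddCircle.measurePreserving_mk T (-1)).map_eq
  have hFae : (F ∘ (fun x : ℝ => (x : AddCircle T))) =ᵐ[volume.restrict (Set.Ioc (-1:ℝ) (-1 + T))] f := by
    filter_upwards [ae_restrict_mem measurableSet_Ioc] with x hx
    exact hcomp x hx
  have hFL2 : MemLp F 2 (volume : Measure (AddCircle T)) := by
    rw [← hmap]
    rw [memLp_map_measure_iff (by rw [hmap]; exact hFm.aestronglyMeasurable)
      AddCircle.measurable_mk'.aemeasurable]
    refine MemLp.ae_eq hFae.symm ?_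
    rw [hIoc]
    exact hL2
  have hvol : (volume : Measure (AddCircle T)) = ENNReal.ofReal T • AddCircle.haarAddCircle :=
    AddCircle.volume_eq_smul_haarAddCircle
  have hT0 : (0:ℝ) < T := hT.out
  have hFL2h : MemLp F 2 (AddCircle.haarAddCircle : Measure (AddCircle T)) := by
    have : (AddCircle.haarAddCircle : Measure (AddCircle T)) = (ENNReal.ofReal T)⁻¹ • volume := by
      rw [hvol, smul_smul, ENNReal.inv_mul_cancel (by simp only [ne_eq, ENNReal.ofReal_eq_zero, not_le]; exact hT0) ENNReal.ofReal_ne_top, one_smul]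
    rw [this]
    exact hFL2.smul_measure (by simp only [ne_eq, ENNReal.inv_eq_top, ENNReal.ofReal_eq_zero, not_le]; exact hT0)
  set L := hFL2h.toLp F with hL
  have hLae : (L : AddCircle T → ℂ) =ᵐ[AddCircle.haarAddCircle] F := hFL2h.coeFn_toLp
  have hcoeff : ∀ n : ℤ, fourierCoeff (L : AddCircle T → ℂ) n = fourierCoeffOn neg1lt1 f n := by
    intro n
    have h1 : fourierCoeff (L : AddCircle T → ℂ) n = fourierCoeff F n := by
      simp only [fourierCoeff]
      exact integral_congr_ae (hLae.mono fun t ht => by simp only [ht])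
    rw [h1]
    rfl
  have hpar := tsum_sq_fourierCoeff L
  have hsum : Summable (fun n : ℤ => ‖fourierCoeff (L : AddCircle T → ℂ) n‖^2) := by
    have hmem := lp.memℓp (fourierBasis.repr L)
    have := hmem.summable (p := 2) (by norm_num)
    simp only [fourierBasis_repr] at this
    convert this using 2 with n
    rw [ENNReal.toReal_ofNat]
    rw [← Real.rpow_natCast ‖fourierCoeff (L : AddCircle T → ℂ) n‖ 2]
    norm_num
  have hint : ∫ t : AddCircle T, ‖(L : AddCircle T → ℂ) t‖^2 ∂AddCircle.haarAddCircle
      = (1/2) * ∫ x in Set.Ioc (-1:ℝ) 1, ‖f x‖^2 := by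
    have e1 : ∫ t : AddCircle T, ‖(L : AddCircle T → ℂ) t‖^2 ∂AddCircle.haarAddCircle
        = ∫ t : AddCircle T, ‖F t‖^2 ∂AddCircle.haarAddCircle :=
      integral_congr_ae (hLae.mono fun t ht => by simp only [ht])
    have e2 : ∫ t : AddCircle T, ‖F t‖^2 ∂(volume : Measure (AddCircle T))
        = 2 * ∫ t : AddCircle T, ‖F t‖^2 ∂AddCircle.haarAddCircle := by
      rw [hvol, integral_smul_measure]
      norm_num [hTdef]
    have e3 : ∫ x in Set.Ioc (-1:ℝ) (-1 + T), ‖F ((x:ℝ) : AddCircle T)‖^2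
        = ∫ t : AddCircle T, ‖F t‖^2 ∂(volume : Measure (AddCircle T)) :=
      AddCircle.integral_preimage T (-1) (fun t => ‖F t‖^2)
    have e4 : ∫ x in Set.Ioc (-1:ℝ) (-1 + T), ‖F ((x:ℝ) : AddCircle T)‖^2
        = ∫ x in Set.Ioc (-1:ℝ) 1, ‖f x‖^2 := by
      rw [hIoc]
      refine setIntegral_congr_fun measurableSet_Ioc fun x hx => ?_
      rw [hcomp x (by rwa [hIoc])]
    rw [e1]
    rw [e4] at e3
    rw [← e3] at e2
    linarith [e2]
  constructor
  · rw [← hint, ← hpar]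
    exact tsum_congr fun n => by rw [hcoeff n]
  · convert hsum using 2 with n
    rw [hcoeff n]





lemma fourier_eq_exp (n : ℤ) (x : ℝ) :
    (fourier (-n) (x : AddCircle (1 - -1 : ℝ)) : ℂ) = Complex.exp ((-(π * n) * Complex.I) * x) := by
  rw [fourier_coe_apply]
  congr 1
  push_cast
  ring

lemma coeff_rel (g : ℝ → ℝ) (hgm : StronglyMeasurable g)
    (hg : IntervalIntegrable g volume (-1) 1)
    (hg0 : ∫ t in (-1:ℝ)..1, g t = 0) (n : ℤ) (hn : n ≠ 0) :
    fourierCoeffOn neg1lt1 (fun x => ((∫ t in (-1:ℝ)..x, g t : ℝ) : ℂ)) n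
      = (Complex.I * π * n)⁻¹ * fourierCoeffOn neg1lt1 (fun t => ((g t : ℝ) : ℂ)) n := by
  have hπ : (π:ℝ) ≠ 0 := Real.pi_ne_zero
  set c : ℂ := -(π * n) * Complex.I with hc
  have hn' : (n:ℂ) ≠ 0 := Int.cast_ne_zero.mpr hn
  have hπ' : ((π:ℝ):ℂ) ≠ 0 := Complex.ofReal_ne_zero.mpr hπ
  have hc0 : c ≠ 0 := by
    rw [hc]
    simp [hπ', hn', Complex.I_ne_zero]
  have hcinv : c⁻¹ = (↑n)⁻¹ * (((π:ℝ):ℂ)⁻¹ * Complex.I) := by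
    rw [hc, show -(((π:ℝ):ℂ) * n) * Complex.I = (((π:ℝ):ℂ)*n) * (-Complex.I) by ring,
      mul_inv, inv_neg, Complex.inv_I, neg_neg, mul_inv]
    ring
  have hψc : Continuous (fun x : ℝ => Complex.exp (c * x)) := by fun_prop
  have hfub := fub g hgm hg (fun x : ℝ => Complex.exp (c * x)) hψc
  have igc : IntervalIntegrable (fun t => ((g t : ℝ) : ℂ)) volume (-1) 1 :=
    ⟨hg.1.ofReal, hg.2.ofReal⟩
  -- inner integral
  have hinner : ∀ t : ℝ, (∫ x in t..(1:ℝ), Complex.exp (c * x))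
      = (Complex.exp c - Complex.exp (c * t)) / c := by
    intro t
    rw [integral_exp_mul_complex hc0]
    norm_num
  -- LHS as integral
  rw [fourierCoeffOn_eq_integral, fourierCoeffOn_eq_integral]
  have e1 : ∀ x : ℝ, (fourier (-n) (x : AddCircle (1 - -1 : ℝ)) : ℂ)
      • ((∫ t in (-1:ℝ)..x, g t : ℝ) : ℂ) = (∫ t in (-1:ℝ)..x, g t : ℝ) • Complex.exp (c * x) := by
    intro x
    rw [fourier_eq_exp, smul_eq_mul, Complex.real_smul, mul_comm, ← hc]
  have e2 : ∀ t : ℝ, (fourier (-n) (t : AddCircle (1 - -1 : ℝ)) : ℂ) • ((g t : ℝ) : ℂ)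
      = (g t : ℝ) • Complex.exp (c * t) := by
    intro t
    rw [fourier_eq_exp, smul_eq_mul, Complex.real_smul, mul_comm, ← hc]
  simp only [e1, e2]
  rw [hfub]
  have e3 : ∀ t : ℝ, (g t : ℝ) • (∫ x in t..(1:ℝ), Complex.exp (c * x))
      = (Complex.exp c / c) * ((g t : ℝ) : ℂ) - (1/c) * (((g t : ℝ) : ℂ) * Complex.exp (c * t)) := by
    intro t
    rw [hinner t, Complex.real_smul]
    ring
  simp only [e3]
  rw [intervalIntegral.integral_sub (by apply IntervalIntegrable.const_mul; exact igc)
    (by apply IntervalIntegrable.const_mul; exact igc.mul_continuousOn hψc.continuousOn),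
    intervalIntegral.integral_const_mul, intervalIntegral.integral_const_mul,
    intervalIntegral.integral_ofReal, hg0]
  have e4 : ∀ t : ℝ, (g t : ℝ) • Complex.exp (c * t) = ((g t : ℝ) : ℂ) * Complex.exp (c * t) := by
    intro t; rw [Complex.real_smul]
  simp only [e4]
  norm_num
  rw [hcinv]
  ring





lemma wirtinger_aux (g : ℝ → ℝ) (hgm : StronglyMeasurable g)
    (hg : IntervalIntegrable g volume (-1) 1)
    (hg2 : MemLp g 2 (volume.restrict (Set.Ioc (-1:ℝ) 1)))
    (hg0 : ∫ t in (-1:ℝ)..1, g t = 0)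
    (hmean : ∫ x in (-1:ℝ)..1, (∫ t in (-1:ℝ)..x, g t) = 0) :
    π^2 * ∫ x in (-1:ℝ)..1, (∫ t in (-1:ℝ)..x, g t)^2 ≤ ∫ t in (-1:ℝ)..1, (g t)^2 := by
  haveI hfin : IsFiniteMeasure (volume.restrict (Set.Ioc (-1:ℝ) 1)) := by
    constructor
    rw [Measure.restrict_apply_univ]
    exact measure_Ioc_lt_top
  have huIcc : Set.uIcc (-1:ℝ) 1 = Set.Icc (-1:ℝ) 1 := Set.uIcc_of_le (by norm_num)
  set U : ℝ → ℝ := fun x => ∫ t in (-1:ℝ)..x, g t with hU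
  set cl : ℝ → ℝ := fun x => max (-1) (min 1 x) with hcl
  have hclcont : Continuous cl := continuous_const.max (continuous_const.min continuous_id)
  have hclmem : ∀ x, cl x ∈ Set.uIcc (-1:ℝ) 1 := by
    intro x
    rw [huIcc]
    constructor
    · exact le_max_left _ _
    · exact max_le (by norm_num) (min_le_left _ _)
  have hcleq : ∀ x ∈ Set.Icc (-1:ℝ) 1, cl x = x := by
    intro x hx
    rw [hcl]
    simp only
    rw [min_eq_right hx.2, max_eq_right hx.1]
  have hUcont : ContinuousOn U (Set.uIcc (-1:ℝ) 1) := by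
    apply intervalIntegral.continuousOn_primitive_interval
    rw [huIcc]
    exact (integrableOn_Icc_iff_integrableOn_Ioc).mpr hg.1
  set V : ℝ → ℝ := fun x => U (cl x) with hV
  have hVcont : Continuous V := hUcont.comp_continuous hclcont hclmem
  have hVU : ∀ x ∈ Set.Icc (-1:ℝ) 1, V x = U x := fun x hx => by rw [hV]; simp only; rw [hcleq x hx]
  have hVUu : ∀ x ∈ Set.uIcc (-1:ℝ) 1, V x = U x := by rw [huIcc]; exact hVU
  obtain ⟨C, hC⟩ := (isCompact_Icc (a := (-1:ℝ)) (b := 1)).exists_bound_of_continuousOn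
    hVcont.continuousOn
  have hVbd : ∀ x, ‖V x‖ ≤ C := by
    intro x
    have h1 : V (cl x) = V x := by
      rw [hV]
      simp only
      rw [hcleq (cl x) (by rw [← huIcc]; exact hclmem x)]
    rw [← h1]
    exact hC _ (by rw [← huIcc]; exact hclmem x)
  set Vc : ℝ → ℂ := fun x => (V x : ℂ) with hVc
  set gc : ℝ → ℂ := fun t => (g t : ℂ) with hgc
  have hVcm : StronglyMeasurable Vc := (Complex.continuous_ofReal.comp hVcont).stronglyMeasurable
  have hgcm : StronglyMeasurable gc := Complex.continuous_ofReal.comp_stronglyMeasurable hgm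
  have hVcL2 : MemLp Vc 2 (volume.restrict (Set.Ioc (-1:ℝ) 1)) := by
    refine MemLp.of_bound hVcm.aestronglyMeasurable C (ae_of_all _ fun x => ?_)
    rw [hVc]
    simp only [Complex.norm_real]
    exact hVbd x
  have hgcL2 : MemLp gc 2 (volume.restrict (Set.Ioc (-1:ℝ) 1)) := hg2.ofReal
  obtain ⟨hparV, hsumV⟩ := parseval₂ Vc hVcm hVcL2
  obtain ⟨hparg, hsumg⟩ := parseval₂ gc hgcm hgcL2
  -- coefficients of V equal coefficients of the primitive
  have hVcoeff : ∀ n : ℤ, fourierCoeffOn neg1lt1 Vc n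
      = fourierCoeffOn neg1lt1 (fun x => ((U x : ℝ) : ℂ)) n := by
    intro n
    rw [fourierCoeffOn_eq_integral, fourierCoeffOn_eq_integral]
    congr 1
    refine intervalIntegral.integral_congr fun x hx => ?_
    rw [hVc]
    simp only
    rw [hVUu x hx]
  have hπ : (0:ℝ) < π := Real.pi_pos
  -- zero-th coefficient vanishes
  have hc0 : fourierCoeffOn neg1lt1 Vc 0 = 0 := by
    rw [hVcoeff 0, fourierCoeffOn_eq_integral]
    simp only [neg_zero, fourier_zero, one_smul]
    rw [intervalIntegral.integral_ofReal]
    rw [hU] at hmean ⊢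
    rw [hmean]
    simp
  -- termwise bound
  have hterm : ∀ n : ℤ, ‖fourierCoeffOn neg1lt1 Vc n‖^2
      ≤ (1/π^2) * ‖fourierCoeffOn neg1lt1 gc n‖^2 := by
    intro n
    by_cases hn : n = 0
    · rw [hn, hc0]
      simp only [norm_zero, ne_eq, OfNat.ofNat_ne_zero, not_false_eq_true, zero_pow]
      positivity
    · rw [hVcoeff n, coeff_rel g hgm hg hg0 n hn, norm_mul, mul_pow]
      have h1 : ‖(Complex.I * (π:ℝ) * (n:ℤ))⁻¹‖ ≤ 1/π := by
        rw [norm_inv, norm_mul, norm_mul, Complex.norm_I, one_mul, Complex.norm_real,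
          Real.norm_eq_abs, abs_of_pos hπ]
        have h2 : (1:ℝ) ≤ ‖((n:ℤ):ℂ)‖ := by
          rw [Complex.norm_intCast]
          exact_mod_cast Int.one_le_abs hn
        rw [one_div]
        apply inv_anti₀ hπ
        nlinarith
      have h2 : ‖fourierCoeffOn neg1lt1 gc n‖^2 ≥ 0 := sq_nonneg _
      calc ‖(Complex.I * (π:ℝ) * (n:ℤ))⁻¹‖^2 * ‖fourierCoeffOn neg1lt1 gc n‖^2
          ≤ (1/π)^2 * ‖fourierCoeffOn neg1lt1 gc n‖^2 := by
            apply mul_le_mul_of_nonneg_right _ h2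
            exact pow_le_pow_left₀ (norm_nonneg _) h1 2
        _ = (1/π^2) * ‖fourierCoeffOn neg1lt1 gc n‖^2 := by rw [div_pow, one_pow]
  have main : ∑' n : ℤ, ‖fourierCoeffOn neg1lt1 Vc n‖^2
      ≤ (1/π^2) * ∑' n : ℤ, ‖fourierCoeffOn neg1lt1 gc n‖^2 := by
    rw [← tsum_mul_left]
    exact Summable.tsum_le_tsum hterm hsumV (hsumg.mul_left _)
  rw [hparV, hparg] at main
  -- convert to real
  have eV : ∫ x in Set.Ioc (-1:ℝ) 1, ‖Vc x‖^2 = ∫ x in (-1:ℝ)..1, (∫ t in (-1:ℝ)..x, g t)^2 := by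
    have e1 : ∀ x, ‖Vc x‖^2 = V x^2 := by
      intro x
      rw [hVc]
      simp only [Complex.norm_real, Real.norm_eq_abs, sq_abs]
    simp only [e1]
    rw [← intervalIntegral.integral_of_le (by norm_num : (-1:ℝ) ≤ 1)]
    refine intervalIntegral.integral_congr fun x hx => ?_
    rw [hVUu x hx, hU]
  have eg : ∫ x in Set.Ioc (-1:ℝ) 1, ‖gc x‖^2 = ∫ t in (-1:ℝ)..1, (g t)^2 := by
    have e1 : ∀ x, ‖gc x‖^2 = g x^2 := by
      intro x
      rw [hgc]
      simp only [Complex.norm_real, Real.norm_eq_abs, sq_abs]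
    simp only [e1]
    rw [← intervalIntegral.integral_of_le (by norm_num : (-1:ℝ) ≤ 1)]
  rw [eV, eg] at main
  have hπ2 : (0:ℝ) < π^2 := by positivity
  rw [div_mul_eq_mul_div, div_mul_eq_mul_div, one_mul, one_mul] at main
  have main2 := (le_div_iff₀ hπ2).mp main
  linarith



lemma restrict_eq : volume.restrict (Set.Ioo (-1:ℝ) 1) = volume.restrict (Set.Ioc (-1:ℝ) 1) :=
  Measure.restrict_congr_set Ioo_ae_eq_Ioc

lemma key_aux (u g : ℝ → ℝ) (hgm : StronglyMeasurable g)
    (hg : IntervalIntegrable g volume (-1) 1)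
    (hg2 : MemLp g 2 (volume.restrict (Set.Ioc (-1:ℝ) 1)))
    (hu : ∀ x ∈ Set.Icc (-1:ℝ) 1, u x = ∫ t in (-1:ℝ)..x, g t)
    (hu1 : u 1 = 0) :
    π^2 * ∫ x in (-1:ℝ)..1, (u x)^2
      ≤ (∫ x in (-1:ℝ)..1, (g x)^2) + (π^2/2) * (∫ x in (-1:ℝ)..1, u x)^2 := by
  haveI hfin : IsFiniteMeasure (volume.restrict (Set.Ioc (-1:ℝ) 1)) := by
    constructor
    rw [Measure.restrict_apply_univ]
    exact measure_Ioc_lt_top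
  have hπ : (0:ℝ) < π := Real.pi_pos
  have huIcc : Set.uIcc (-1:ℝ) 1 = Set.Icc (-1:ℝ) 1 := Set.uIcc_of_le (by norm_num)
  have hg0 : ∫ t in (-1:ℝ)..1, g t = 0 := by
    rw [← hu 1 (by constructor <;> norm_num), hu1]
  -- u is continuous on Icc
  have hUcont : ContinuousOn (fun x => ∫ t in (-1:ℝ)..x, g t) (Set.uIcc (-1:ℝ) 1) := by
    apply intervalIntegral.continuousOn_primitive_interval
    rw [huIcc]
    exact (integrableOn_Icc_iff_integrableOn_Ioc).mpr hg.1
  have hucont : ContinuousOn u (Set.uIcc (-1:ℝ) 1) := by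
    apply hUcont.congr
    rw [huIcc]
    exact hu
  have iu : IntervalIntegrable u volume (-1) 1 := hucont.intervalIntegrable
  set m : ℝ := ∫ x in (-1:ℝ)..1, u x with hm
  set k : ℝ → ℝ := fun t => π * Real.sin (π*t) with hk
  have hkcont : Continuous k := by rw [hk]; fun_prop
  set h : ℝ → ℝ := fun t => g t + (m/2) * k t with hh
  set φ : ℝ → ℝ := fun x => 1 + Real.cos (π*x) with hφ
  have hφcont : Continuous φ := by rw [hφ]; fun_prop
  have ik : IntervalIntegrable (fun t => (m/2) * k t) volume (-1) 1 :=
    Continuous.intervalIntegrable (by fun_prop) _ _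
  have ih : IntervalIntegrable h volume (-1) 1 := hg.add ik
  -- primitive of k
  have ihp : ∀ x : ℝ, ∫ t in (-1:ℝ)..x, k t = -Real.cos (π*x) - 1 := by
    intro x
    rw [hk]
    rw [intervalIntegral.integral_eq_sub_of_hasDerivAt
      (f := fun y => -Real.cos (π*y)) (fun t _ => (hd_cos t).neg.congr_deriv (by simp))
      (Continuous.intervalIntegrable (by fun_prop) _ _)]
    rw [mul_neg_one, Real.cos_neg, Real.cos_pi]
    ring
  have ihk : ∫ t in (-1:ℝ)..1, k t = 0 := by
    rw [ihp 1, mul_one, Real.cos_pi]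
    ring
  -- primitive of h
  have A1 : ∀ x ∈ Set.Icc (-1:ℝ) 1, (∫ t in (-1:ℝ)..x, h t) = u x - (m/2) * φ x := by
    intro x hx
    have hsub : Set.uIcc (-1:ℝ) x ⊆ Set.uIcc (-1:ℝ) 1 :=
      Set.uIcc_subset_uIcc (by rw [huIcc]; constructor <;> norm_num) (by rw [huIcc]; exact hx)
    rw [hh]
    rw [intervalIntegral.integral_add (hg.mono_set hsub) (ik.mono_set hsub),
      intervalIntegral.integral_const_mul, ihp x, ← hu x hx, hφ]
    ring
  have A2 : ∫ t in (-1:ℝ)..1, h t = 0 := by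
    rw [hh, intervalIntegral.integral_add hg ik, intervalIntegral.integral_const_mul, ihk, hg0]
    ring
  have iφ : IntervalIntegrable φ volume (-1) 1 := hφcont.intervalIntegrable _ _
  have iφint : ∫ x in (-1:ℝ)..1, φ x = 2 := by
    have : ∀ x ∈ Set.uIcc (-1:ℝ) 1, φ x = 1 + 1*Real.cos (π*x) + 0*Real.cos (π*x)^2
        + 0*Real.sin (π*x) + 0*(Real.sin (π*x)*Real.cos (π*x)) + 0*Real.sin (π*x)^2 := by
      intro x _; rw [hφ]; ring
    rw [intervalIntegral.integral_congr this, int6]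
    ring
  have A3 : ∫ x in (-1:ℝ)..1, (∫ t in (-1:ℝ)..x, h t) = 0 := by
    have e : ∀ x ∈ Set.uIcc (-1:ℝ) 1, (∫ t in (-1:ℝ)..x, h t) = u x - (m/2) * φ x := by
      rw [huIcc]; exact A1
    rw [intervalIntegral.integral_congr e,
      intervalIntegral.integral_sub iu (iφ.const_mul _),
      intervalIntegral.integral_const_mul, iφint, ← hm]
    ring
  -- L² of h
  have hk2 : MemLp (fun t => (m/2) * k t) 2 (volume.restrict (Set.Ioc (-1:ℝ) 1)) := by
    refine MemLp.of_bound (Continuous.aestronglyMeasurable (by fun_prop)) (|m/2| * π)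
      (ae_of_all _ fun t => ?_)
    rw [hk, Real.norm_eq_abs, abs_mul, abs_mul, abs_of_pos hπ]
    have h1 : |Real.sin (π*t)| ≤ 1 := Real.abs_sin_le_one _
    calc |m/2| * (π * |Real.sin (π*t)|) = (|m/2| * π) * |Real.sin (π*t)| := by ring
      _ ≤ (|m/2| * π) * 1 := mul_le_mul_of_nonneg_left h1 (by positivity)
      _ = |m/2| * π := mul_one _
  have ih2 : MemLp h 2 (volume.restrict (Set.Ioc (-1:ℝ) 1)) := hg2.add hk2
  have hhm : StronglyMeasurable h := hgm.add (Continuous.stronglyMeasurable (by fun_prop))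
  have main := wirtinger_aux h hhm ih ih2 A2 A3
  -- integrability of the pieces
  have iu2 : IntervalIntegrable (fun x => u x^2) volume (-1) 1 :=
    (hucont.pow 2).intervalIntegrable
  have iucos : IntervalIntegrable (fun x => u x * Real.cos (π*x)) volume (-1) 1 :=
    (hucont.mul cont_cos.continuousOn).intervalIntegrable
  have iuφ : IntervalIntegrable (fun x => u x * φ x) volume (-1) 1 :=
    (hucont.mul hφcont.continuousOn).intervalIntegrable
  have iφ2 : IntervalIntegrable (fun x => φ x^2) volume (-1) 1 :=
    Continuous.intervalIntegrable (by fun_prop) _ _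
  set s : ℝ := ∫ x in (-1:ℝ)..1, u x * Real.cos (π*x) with hs
  set P : ℝ := ∫ t in (-1:ℝ)..1, g t * k t with hP
  have iφ2int : ∫ x in (-1:ℝ)..1, φ x ^2 = 3 := by
    have e : ∀ x ∈ Set.uIcc (-1:ℝ) 1, φ x^2 = 1 + 2*Real.cos (π*x) + 1*Real.cos (π*x)^2
        + 0*Real.sin (π*x) + 0*(Real.sin (π*x)*Real.cos (π*x)) + 0*Real.sin (π*x)^2 := by
      intro x _; rw [hφ]; ring
    rw [intervalIntegral.integral_congr e, int6]
    ring
  have iuφint : ∫ x in (-1:ℝ)..1, u x * φ x = m + s := by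
    have e : ∀ x ∈ Set.uIcc (-1:ℝ) 1, u x * φ x = u x + u x * Real.cos (π*x) := by
      intro x _; rw [hφ]; ring
    rw [intervalIntegral.integral_congr e, intervalIntegral.integral_add iu iucos, ← hm, ← hs]
  have EL : ∫ x in (-1:ℝ)..1, (u x - (m/2)*φ x)^2
      = (∫ x in (-1:ℝ)..1, (u x)^2) - m*(m+s) + (m^2/4)*3 := by
    have e : ∀ x ∈ Set.uIcc (-1:ℝ) 1, (u x - (m/2)*φ x)^2
        = u x^2 - m*(u x * φ x) + (m^2/4)*(φ x^2) := by
      intro x _; ring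
    rw [intervalIntegral.integral_congr e,
      intervalIntegral.integral_add (iu2.sub (iuφ.const_mul m)) (iφ2.const_mul _),
      intervalIntegral.integral_sub iu2 (iuφ.const_mul m),
      intervalIntegral.integral_const_mul, intervalIntegral.integral_const_mul,
      iuφint, iφ2int]
  -- right side
  have ig2 : IntervalIntegrable (fun t => g t^2) volume (-1) 1 := by
    rw [intervalIntegrable_iff, Set.uIoc_of_le (by norm_num : (-1:ℝ) ≤ 1)]
    exact hg2.integrable_sq
  have igk : IntervalIntegrable (fun t => g t * k t) volume (-1) 1 :=
    hg.mul_continuousOn hkcont.continuousOn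
  have ik2 : IntervalIntegrable (fun t => k t^2) volume (-1) 1 :=
    Continuous.intervalIntegrable (by fun_prop) _ _
  have ik2int : ∫ t in (-1:ℝ)..1, k t^2 = π^2 := by
    have e : ∀ t ∈ Set.uIcc (-1:ℝ) 1, k t^2 = π^2 * Real.sin (π*t)^2 := by
      intro t _; rw [hk]; ring
    rw [intervalIntegral.integral_congr e, intervalIntegral.integral_const_mul,
      integral_sin_sq_pi, mul_one]
  have ER : ∫ t in (-1:ℝ)..1, (h t)^2
      = (∫ t in (-1:ℝ)..1, (g t)^2) + m*P + (m^2/4)*π^2 := by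
    have e : ∀ t ∈ Set.uIcc (-1:ℝ) 1, (h t)^2
        = g t^2 + m*(g t * k t) + (m^2/4)*(k t^2) := by
      intro t _; rw [hh]; ring
    rw [intervalIntegral.integral_congr e,
      intervalIntegral.integral_add (ig2.add (igk.const_mul m)) (ik2.const_mul _),
      intervalIntegral.integral_add ig2 (igk.const_mul m),
      intervalIntegral.integral_const_mul, intervalIntegral.integral_const_mul,
      ik2int, ← hP]
  -- Fubini relation between s and P
  have hfub := fub g hgm hg (fun x => Real.cos (π*x)) cont_cos
  simp only [smul_eq_mul] at hfub
  have hinner : ∀ t : ℝ, ∫ x in t..(1:ℝ), Real.cos (π*x) = -Real.sin (π*t)/π := by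
    intro t
    rw [intervalIntegral.integral_eq_sub_of_hasDerivAt
      (f := fun y => Real.sin (π*y)/π) (fun y _ => by
        simpa [mul_div_assoc, mul_div_cancel_left₀ _ (ne_of_gt hπ)] using (hd_sin y).div_const π)
      (cont_cos.intervalIntegrable _ _)]
    rw [mul_one, Real.sin_pi]
    ring
  have hfubL : ∫ x in (-1:ℝ)..1, (∫ t in (-1:ℝ)..x, g t) * Real.cos (π*x) = s := by
    rw [hs]
    refine intervalIntegral.integral_congr fun x hx => ?_
    rw [← hu x (by rwa [huIcc] at hx)]
  have hfubR : ∫ t in (-1:ℝ)..1, g t * (∫ x in t..(1:ℝ), Real.cos (π*x)) = -(1/π^2)*P := by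
    have e : ∀ t ∈ Set.uIcc (-1:ℝ) 1, g t * (∫ x in t..(1:ℝ), Real.cos (π*x))
        = -(1/π^2) * (g t * k t) := by
      intro t _
      rw [hinner t, hk]
      field_simp
    rw [intervalIntegral.integral_congr e, intervalIntegral.integral_const_mul, ← hP]
  have hsP : s = -(1/π^2)*P := by rw [← hfubL, hfub, hfubR]
  have hPs : P = -(π^2 * s) := by
    rw [hsP]
    field_simp
  -- combine
  have e2 : ∫ x in (-1:ℝ)..1, (∫ t in (-1:ℝ)..x, h t)^2
      = ∫ x in (-1:ℝ)..1, (u x - (m/2)*φ x)^2 := by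
    refine intervalIntegral.integral_congr fun x hx => ?_
    rw [A1 x (by rwa [huIcc] at hx)]
  rw [e2, EL, ER, hPs] at main
  nlinarith [main]





lemma key (u g : ℝ → ℝ)
    (hg : IntervalIntegrable g volume (-1) 1)
    (hg2 : MemLp g 2 (volume.restrict (Set.Ioo (-1:ℝ) 1)))
    (hu : ∀ x ∈ Set.Icc (-1:ℝ) 1, u x = ∫ t in (-1:ℝ)..x, g t)
    (hu1 : u 1 = 0) :
    π^2 * ∫ x in (-1:ℝ)..1, (u x)^2
      ≤ (∫ x in (-1:ℝ)..1, (g x)^2) + (π^2/2) * (∫ x in (-1:ℝ)..1, u x)^2 := by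
  rw [restrict_eq] at hg2
  have ham : AEStronglyMeasurable g (volume.restrict (Set.Ioc (-1:ℝ) 1)) :=
    hg.1.aestronglyMeasurable
  set G := ham.mk g with hGdef
  have hGm : StronglyMeasurable G := ham.stronglyMeasurable_mk
  have hae : g =ᵐ[volume.restrict (Set.Ioc (-1:ℝ) 1)] G := ham.ae_eq_mk
  have haev : ∀ᵐ t ∂(volume : Measure ℝ), t ∈ Set.Ioc (-1:ℝ) 1 → g t = G t :=
    (ae_restrict_iff' measurableSet_Ioc).mp hae
  have hGg : IntervalIntegrable G volume (-1) 1 := by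
    constructor
    · exact hg.1.congr hae
    · rw [Set.Ioc_eq_empty (by norm_num)]
      exact integrableOn_empty
  have hG2 : MemLp G 2 (volume.restrict (Set.Ioc (-1:ℝ) 1)) := hg2.ae_eq hae
  have hGprim : ∀ x ∈ Set.Icc (-1:ℝ) 1, (∫ t in (-1:ℝ)..x, G t) = ∫ t in (-1:ℝ)..x, g t := by
    intro x hx
    refine intervalIntegral.integral_congr_ae ?_
    filter_upwards [haev] with t ht htIn
    rw [Set.uIoc_of_le hx.1] at htIn
    exact (ht ⟨htIn.1, le_trans htIn.2 hx.2⟩).symm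
  have hu' : ∀ x ∈ Set.Icc (-1:ℝ) 1, u x = ∫ t in (-1:ℝ)..x, G t :=
    fun x hx => (hu x hx).trans (hGprim x hx).symm
  have hsq : ∫ x in (-1:ℝ)..1, (g x)^2 = ∫ x in (-1:ℝ)..1, (G x)^2 := by
    refine intervalIntegral.integral_congr_ae ?_
    filter_upwards [haev] with t ht htIn
    rw [Set.uIoc_of_le (by norm_num : (-1:ℝ) ≤ 1)] at htIn
    rw [ht htIn]
  rw [hsq]
  exact key_aux u G hGm hGg hG2 hu' hu1

lemma den_pos (u g : ℝ → ℝ)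
    (hg : IntervalIntegrable g volume (-1) 1)
    (hu : ∀ x ∈ Set.Icc (-1:ℝ) 1, u x = ∫ t in (-1:ℝ)..x, g t)
    (hnt : ∃ x ∈ Set.Icc (-1:ℝ) 1, u x ≠ 0) :
    0 < ∫ x in (-1:ℝ)..1, (u x)^2 := by
  have huIcc : Set.uIcc (-1:ℝ) 1 = Set.Icc (-1:ℝ) 1 := Set.uIcc_of_le (by norm_num)
  have hUcont : ContinuousOn (fun x => ∫ t in (-1:ℝ)..x, g t) (Set.uIcc (-1:ℝ) 1) := by
    apply intervalIntegral.continuousOn_primitive_interval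
    rw [huIcc]
    exact (integrableOn_Icc_iff_integrableOn_Ioc).mpr hg.1
  have hucont : ContinuousOn u (Set.uIcc (-1:ℝ) 1) := by
    apply hUcont.congr
    rw [huIcc]
    exact hu
  have iu2 : IntervalIntegrable (fun x => u x^2) volume (-1) 1 :=
    (hucont.pow 2).intervalIntegrable
  obtain ⟨x₀, hx₀, hne⟩ := hnt
  set f : ℝ → ℝ := fun x => u x^2 with hf
  have hfpos : 0 < f x₀ := by positivity
  have hfcont : ContinuousOn f (Set.Icc (-1:ℝ) 1) := by
    rw [← huIcc]
    exact hucont.pow 2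
  have hfc : ContinuousWithinAt f (Set.Icc (-1:ℝ) 1) x₀ := hfcont x₀ hx₀
  have hev : ∀ᶠ y in nhdsWithin x₀ (Set.Icc (-1:ℝ) 1), f x₀/2 < f y :=
    hfc.eventually (eventually_gt_nhds (by linarith))
  rw [Filter.Eventually, Metric.mem_nhdsWithin_iff] at hev
  obtain ⟨δ, hδ, hball⟩ := hev
  set c : ℝ := max (-1) (x₀ - δ/2) with hc
  set d : ℝ := min 1 (x₀ + δ/2) with hd
  have hcd : c < d := by
    rw [hc, hd, lt_min_iff]
    constructor
    · rw [max_lt_iff]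
      exact ⟨by norm_num, by linarith [hx₀.2]⟩
    · rw [max_lt_iff]
      exact ⟨by linarith [hx₀.1], by linarith⟩
  have hcIcc : ∀ y ∈ Set.Icc c d, f x₀/2 ≤ f y := by
    intro y hy
    have h1 : y ∈ Set.Icc (-1:ℝ) 1 :=
      ⟨le_trans (le_max_left _ _) hy.1, le_trans hy.2 (min_le_left _ _)⟩
    have h2 : dist y x₀ < δ := by
      rw [Real.dist_eq, abs_lt]
      constructor
      · have := le_trans (le_max_right _ _) hy.1
        linarith
      · have := le_trans hy.2 (min_le_right _ _)
        linarith
    exact le_of_lt (hball ⟨Metric.mem_ball.mpr h2, h1⟩)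
  have h1le : (-1:ℝ) ≤ c := le_max_left _ _
  have hd1 : d ≤ 1 := min_le_left _ _
  have isub1 : IntervalIntegrable f volume (-1) c :=
    iu2.mono_set (Set.uIcc_subset_uIcc (by rw [huIcc]; constructor <;> norm_num)
      (by rw [huIcc]; exact ⟨h1le, le_trans (le_of_lt hcd) hd1⟩))
  have isub2 : IntervalIntegrable f volume c d :=
    iu2.mono_set (Set.uIcc_subset_uIcc (by rw [huIcc]; exact ⟨h1le, le_trans (le_of_lt hcd) hd1⟩)
      (by rw [huIcc]; exact ⟨le_trans h1le (le_of_lt hcd), hd1⟩))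
  have isub3 : IntervalIntegrable f volume d 1 :=
    iu2.mono_set (Set.uIcc_subset_uIcc (by rw [huIcc]; exact ⟨le_trans h1le (le_of_lt hcd), hd1⟩)
      (by rw [huIcc]; constructor <;> norm_num))
  have e1 : ∫ x in (-1:ℝ)..1, f x = (∫ x in (-1:ℝ)..c, f x) + (∫ x in c..d, f x)
      + ∫ x in d..(1:ℝ), f x := by
    rw [intervalIntegral.integral_add_adjacent_intervals isub1 isub2,
      intervalIntegral.integral_add_adjacent_intervals (isub1.trans isub2) isub3]
  have hnn1 : 0 ≤ ∫ x in (-1:ℝ)..c, f x :=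
    intervalIntegral.integral_nonneg h1le (fun y _ => by positivity)
  have hnn3 : 0 ≤ ∫ x in d..(1:ℝ), f x :=
    intervalIntegral.integral_nonneg hd1 (fun y _ => by positivity)
  have hmid : (d - c) * (f x₀/2) ≤ ∫ x in c..d, f x := by
    have := intervalIntegral.integral_mono_on (le_of_lt hcd)
      (intervalIntegrable_const (c := f x₀/2)) isub2 hcIcc
    rwa [intervalIntegral.integral_const, smul_eq_mul] at this
  have hmidpos : 0 < (d - c) * (f x₀/2) := by
    apply mul_pos (by linarith) (by linarith)
  show 0 < ∫ x in (-1:ℝ)..1, f x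
  rw [e1]
  linarith


lemma Q_simp (u g : ℝ → ℝ) :
    Qfun (π^2/2) 1 u g
      = ((∫ x in (-1:ℝ)..1, (g x)^2) + (π^2/2) * (∫ x in (-1:ℝ)..1, u x)^2)
        / (∫ x in (-1:ℝ)..1, (u x)^2) := by
  unfold Qfun
  have e1 : ∀ x : ℝ, |u x| ^ ((1:ℝ) - 1) * u x = u x := by
    intro x
    rw [sub_self, Real.rpow_zero, one_mul]
  simp only [e1]
  have e2 : |∫ x in (-1:ℝ)..1, u x| ^ ((2:ℝ)/1) = (∫ x in (-1:ℝ)..1, u x)^2 := by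
    rw [div_one, show ((2:ℝ)) = ((2:ℕ):ℝ) by norm_num, Real.rpow_natCast, sq_abs]
  rw [e2]

lemma isH10_yA (A : ℝ) (hA0 : 0 ≤ A) (hA1 : A ≤ 1) : IsH10 (yA A) (gA A) := by
  haveI hfin : IsFiniteMeasure (volume.restrict (Set.Ioo (-1:ℝ) 1)) := by
    constructor
    rw [Measure.restrict_apply_univ]
    exact measure_Ioo_lt_top
  have hπ : (0:ℝ) < π := Real.pi_pos
  refine ⟨(cont_gA A).intervalIntegrable _ _, ?_, yA_eq_int A, yA_one A⟩
  refine MemLp.of_bound (cont_gA A).aestronglyMeasurable (A/2*π + π) (ae_of_all _ fun x => ?_)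
  have s1 : |Real.sin (π*x)| ≤ 1 := Real.abs_sin_le_one _
  have c1 : |Real.cos (π*x)| ≤ 1 := Real.abs_cos_le_one _
  have hBnn : 0 ≤ Real.sqrt (1-A) := Real.sqrt_nonneg _
  have hB1 : Real.sqrt (1-A) ≤ 1 := Real.sqrt_le_one.mpr (by linarith)
  rw [Real.norm_eq_abs]
  calc |gA A x| ≤ |(-(A/2))*π*Real.sin (π*x)| + |Real.sqrt (1-A)*π*Real.cos (π*x)| := by
        unfold gA
        exact abs_sub _ _
    _ = (A/2)*π*|Real.sin (π*x)| + Real.sqrt (1-A)*π*|Real.cos (π*x)| := by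
        rw [abs_mul, abs_mul, abs_mul, abs_mul, abs_neg, abs_of_nonneg (by linarith : (0:ℝ) ≤ A/2),
          abs_of_pos hπ, abs_of_nonneg hBnn]
    _ ≤ A/2*π + π := by
        have t1 := mul_le_mul_of_nonneg_left s1 (show (0:ℝ) ≤ A/2*π by positivity)
        have t2 := mul_le_mul_of_nonneg_left c1 (show (0:ℝ) ≤ Real.sqrt (1-A)*π by positivity)
        have t3 : Real.sqrt (1-A)*π ≤ π := by nlinarith
        linarith
  
lemma nontriv_yA (A : ℝ) (hA0 : 0 ≤ A) (hA1 : A ≤ 1) : Nontriv (yA A) := by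
  refine ⟨-(1/2), by constructor <;> norm_num, ?_⟩
  have hval : yA A (-(1/2)) = A/2 + Real.sqrt (1-A) := by
    unfold yA
    rw [show π * (-(1/2):ℝ) = -(π/2) by ring, Real.cos_neg, Real.sin_neg,
      Real.cos_pi_div_two, Real.sin_pi_div_two]
    ring
  rw [hval]
  have : 0 < A/2 + Real.sqrt (1-A) := by
    rcases eq_or_lt_of_le hA0 with h | h
    · rw [← h]
      norm_num
    · exact add_pos_of_pos_of_nonneg (by linarith) (Real.sqrt_nonneg _)
  exact ne_of_gt this

lemma Qval (A : ℝ) (hA0 : 0 ≤ A) (hA1 : A ≤ 1) :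
    Qfun (π^2/2) 1 (yA A) (gA A) = π^2 := by
  rw [Q_simp, integral_gA_sq A hA1, integral_yA, integral_yA_sq A hA1,
    div_eq_iff (ne_of_gt (den_yA_pos A hA0 hA1))]
  ring

lemma lower_bound : ∀ v ∈ {v : ℝ | ∃ u g : ℝ → ℝ, IsH10 u g ∧ Nontriv u ∧ Qfun (π^2/2) 1 u g = v},
    π^2 ≤ v := by
  rintro v ⟨u, g, ⟨hg, hg2, hu, hu1⟩, hnt, rfl⟩
  rw [Q_simp]
  have hd := den_pos u g hg hu hnt
  rw [le_div_iff₀ hd]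
  have hk := key u g hg hg2 hu hu1
  linarith

lemma lam_eq : lam (π^2/2) 1 = π^2 := by
  have hmem : π^2 ∈ {v : ℝ | ∃ u g : ℝ → ℝ, IsH10 u g ∧ Nontriv u ∧ Qfun (π^2/2) 1 u g = v} :=
    ⟨yA 1, gA 1, isH10_yA 1 (by norm_num) (by norm_num),
      nontriv_yA 1 (by norm_num) (by norm_num), Qval 1 (by norm_num) (by norm_num)⟩
  unfold lam
  apply le_antisymm
  · exact csInf_le ⟨π^2, lower_bound⟩ hmem
  · exact le_csInf ⟨π^2, hmem⟩ lower_bound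

end Stmt3Aux

open Stmt3Aux in
/-- For `q = 1` and `α = π²/2`, each `y_A`, `A ∈ [0,1]`, is a minimizer of
`λ(π²/2,1) = π²` with `∫ y_A = A`; in particular there is a positive minimizer (`A = 1`),
and for `A ∈ (0,1)` a minimizer changing sign at a point `x̄ ≠ 0` with nonzero average. -/
theorem statement3 :
    lam (π ^ 2 / 2) 1 = π ^ 2 ∧
    (∀ A ∈ Set.Icc (0 : ℝ) 1,
      IsMinimizer (π ^ 2 / 2) 1 (yA A) (gA A) ∧ (∫ x in (-1 : ℝ)..1, yA A x) = A) ∧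
    (∀ x ∈ Set.Ioo (-1 : ℝ) 1, 0 < yA 1 x) ∧
    (∀ A ∈ Set.Ioo (0 : ℝ) 1,
      ∃ x₀ ∈ Set.Ioo (-1 : ℝ) 1, x₀ ≠ 0 ∧ yA A x₀ = 0 ∧
        (∃ a ∈ Set.Ioo (-1 : ℝ) 1, 0 < yA A a) ∧
        (∃ b ∈ Set.Ioo (-1 : ℝ) 1, yA A b < 0) ∧
        (∫ x in (-1 : ℝ)..1, yA A x) ≠ 0) := by
  refine ⟨lam_eq, fun A hA => ⟨⟨isH10_yA A hA.1 hA.2, nontriv_yA A hA.1 hA.2, ?_⟩,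
    integral_yA A⟩, fun x hx => yA_one_pos x hx, fun A hA => yA_sign A hA⟩
  rw [Qval A hA.1 hA.2, lam_eq]
end
end

section
/- Let q ∈ [1,2]. If α ≤ 0, then every minimizer of λ(α,q) has constant sign on (−1,1) (it does not change sign). Moreover, λ(α,q) → −∞ as α → −∞. -/
open MeasureTheory Real Filter

noncomputable section

namespace S9

/-- The admissible-values set. -/
def Sset (α q : ℝ) : Set ℝ :=
  {v : ℝ | ∃ u g : ℝ → ℝ, IsH10 u g ∧ Nontriv u ∧ Qfun α q u g = v}

lemma lam_eq (α q : ℝ) : lam α q = sInf (Sset α q) := rfl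

lemma intInt_IccOn {g : ℝ → ℝ} {a b : ℝ} (hab : a ≤ b)
    (h : IntervalIntegrable g volume a b) : IntegrableOn g (Set.Icc a b) volume := by
  rw [← intervalIntegrable_iff_integrableOn_Icc_of_le hab]; exact h

lemma u_neg_one {u g : ℝ → ℝ} (h : IsH10 u g) : u (-1) = 0 := by
  have := h.2.2.1 (-1) (by constructor <;> norm_num)
  simpa using this

lemma contOn {u g : ℝ → ℝ} (h : IsH10 u g) : ContinuousOn u (Set.Icc (-1 : ℝ) 1) := by
  have h1 : IntegrableOn g (Set.uIcc (-1 : ℝ) 1) volume := by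
    rw [Set.uIcc_of_le (by norm_num : (-1:ℝ) ≤ 1)]
    exact intInt_IccOn (by norm_num) h.1
  have h2 := intervalIntegral.continuousOn_primitive_interval h1
  rw [Set.uIcc_of_le (by norm_num : (-1:ℝ) ≤ 1)] at h2
  exact ContinuousOn.congr h2 h.2.2.1

lemma sub_intInt {g : ℝ → ℝ} (h : IntervalIntegrable g volume (-1) 1) {a b : ℝ}
    (ha : a ∈ Set.Icc (-1:ℝ) 1) (hb : b ∈ Set.Icc (-1:ℝ) 1) :
    IntervalIntegrable g volume a b := by
  refine h.mono_set ?_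
  rw [Set.uIcc_of_le (by norm_num : (-1:ℝ) ≤ 1)]
  exact Set.uIcc_subset_Icc ha hb

lemma primitive_sub {u g : ℝ → ℝ} (h : IsH10 u g) {a b : ℝ}
    (ha : a ∈ Set.Icc (-1:ℝ) 1) (hb : b ∈ Set.Icc (-1:ℝ) 1) :
    ∫ t in a..b, g t = u b - u a := by
  have h1 : IntervalIntegrable g volume (-1) a := sub_intInt h.1 (by constructor <;> norm_num) ha
  have h2 : IntervalIntegrable g volume a b := sub_intInt h.1 ha hb
  have := intervalIntegral.integral_add_adjacent_intervals h1 h2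
  rw [h.2.2.1 a ha, h.2.2.1 b hb, ← this]; ring

lemma contOn_phi {u : ℝ → ℝ} {q : ℝ} (hq : 1 ≤ q) {s : Set ℝ} (hu : ContinuousOn u s) :
    ContinuousOn (fun x => |u x| ^ (q - 1) * u x) s := by
  rcases eq_or_lt_of_le hq with h1 | h1
  · have : ∀ x, |u x| ^ (q-1) * u x = u x := by
      intro x; rw [← h1]; simp
    simpa [this] using hu
  · refine ContinuousOn.mul ?_ hu
    have hc : Continuous fun y : ℝ => |y| ^ (q - 1) := by
      have : ∀ y : ℝ, ContinuousAt (fun y : ℝ => |y| ^ (q-1)) y := by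
        intro y
        exact (Real.continuousAt_rpow_const _ _ (Or.inr (by linarith))).comp
          continuous_abs.continuousAt
      exact continuous_iff_continuousAt.2 this
    exact hc.comp_continuousOn hu

lemma nontriv_interior {u g : ℝ → ℝ} (h : IsH10 u g) (hnt : Nontriv u) :
    ∃ x ∈ Set.Ioo (-1:ℝ) 1, u x ≠ 0 := by
  obtain ⟨x, hx, hux⟩ := hnt
  refine ⟨x, ?_, hux⟩
  rcases eq_or_lt_of_le hx.1 with h1 | h1
  · exact absurd (u_neg_one h) (by rw [← h1] at hux; exact hux)
  rcases eq_or_lt_of_le hx.2 with h2 | h2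
  · exact absurd h.2.2.2 (by rw [h2] at hux; exact hux)
  exact ⟨h1, h2⟩

lemma denom_pos {u g : ℝ → ℝ} (h : IsH10 u g) (hnt : Nontriv u) :
    0 < ∫ x in (-1:ℝ)..1, (u x) ^ 2 := by
  obtain ⟨x₀, hx₀, hux⟩ := nontriv_interior h hnt
  have hc : ContinuousOn u (Set.Icc (-1:ℝ) 1) := contOn h
  have hca : ContinuousAt u x₀ :=
    hc.continuousAt (Icc_mem_nhds hx₀.1 hx₀.2)
  have hne : ∀ᶠ y in nhds x₀, u y ≠ 0 := hca.eventually_ne hux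
  obtain ⟨ε, hε, hball⟩ := Metric.eventually_nhds_iff_ball.1 hne
  set a := max (-1) (x₀ - ε/2)
  set b := min 1 (x₀ + ε/2)
  have hax : a < x₀ := by
    apply max_lt hx₀.1; linarith
  have hxb : x₀ < b := by
    apply lt_min hx₀.2; linarith
  have haI : a ∈ Set.Icc (-1:ℝ) 1 := by
    constructor
    · exact le_max_left _ _
    · apply max_le (by norm_num); apply le_trans (by linarith : x₀ - ε/2 ≤ x₀) hx₀.2.le
  have hbI : b ∈ Set.Icc (-1:ℝ) 1 := by
    constructor
    · apply le_min (by norm_num); exact le_trans hx₀.1.le (by linarith : x₀ ≤ x₀ + ε/2)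
    · exact min_le_left _ _
  have hsq : IntervalIntegrable (fun x => (u x)^2) volume (-1) 1 :=
    ((hc.pow 2).mono (by rw [Set.uIcc_of_le (by norm_num : (-1:ℝ) ≤ 1)] : Set.uIcc (-1:ℝ) 1 ⊆ Set.Icc (-1:ℝ) 1)).intervalIntegrable
  have hsub1 : IntervalIntegrable (fun x => (u x)^2) volume (-1) a :=
    sub_intInt hsq (by constructor <;> norm_num) haI
  have hsub2 : IntervalIntegrable (fun x => (u x)^2) volume a b := sub_intInt hsq haI hbI
  have hsub3 : IntervalIntegrable (fun x => (u x)^2) volume b 1 :=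
    sub_intInt hsq hbI (by constructor <;> norm_num)
  have hmid : 0 < ∫ x in a..b, (u x)^2 := by
    apply intervalIntegral.intervalIntegral_pos_of_pos_on hsub2
    · intro x hx
      have : u x ≠ 0 := by
        apply hball
        rw [Metric.mem_ball, Real.dist_eq, abs_lt]
        constructor
        · have : x₀ - ε/2 ≤ a := le_max_right _ _
          have := hx.1; nlinarith [hε]
        · have : b ≤ x₀ + ε/2 := min_le_right _ _
          have := hx.2; nlinarith [hε]
      positivity
    · linarith
  have e1 : 0 ≤ ∫ x in (-1:ℝ)..a, (u x)^2 :=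
    intervalIntegral.integral_nonneg haI.1 (fun x _ => sq_nonneg _)
  have e3 : 0 ≤ ∫ x in b..(1:ℝ), (u x)^2 :=
    intervalIntegral.integral_nonneg hbI.2 (fun x _ => sq_nonneg _)
  have := intervalIntegral.integral_add_adjacent_intervals hsub1 hsub2
  have := intervalIntegral.integral_add_adjacent_intervals (hsub1.trans hsub2) hsub3
  calc (0:ℝ) < (∫ x in (-1:ℝ)..a, (u x)^2) + (∫ x in a..b, (u x)^2)
        + (∫ x in b..(1:ℝ), (u x)^2) := by linarith
    _ = ∫ x in (-1:ℝ)..1, (u x)^2 := by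
        rw [intervalIntegral.integral_add_adjacent_intervals hsub1 hsub2]
        rw [intervalIntegral.integral_add_adjacent_intervals (hsub1.trans hsub2) hsub3]


lemma intInt_uq {u : ℝ → ℝ} {q : ℝ} (hq : 1 ≤ q) (hc : ContinuousOn u (Set.Icc (-1:ℝ) 1)) :
    IntervalIntegrable (fun x => |u x| ^ q) volume (-1) 1 := by
  have hcont : ContinuousOn (fun x => |u x| ^ q) (Set.Icc (-1:ℝ) 1) := by
    have h1 : Continuous fun y : ℝ => |y| ^ q := by
      refine continuous_iff_continuousAt.2 fun y => ?_
      exact (Real.continuousAt_rpow_const _ _ (Or.inr (by linarith))).comp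
        continuous_abs.continuousAt
    exact h1.comp_continuousOn hc
  exact (hcont.mono (by rw [Set.uIcc_of_le (by norm_num : (-1:ℝ) ≤ 1)] :
    Set.uIcc (-1:ℝ) 1 ⊆ Set.Icc (-1:ℝ) 1)).intervalIntegrable

lemma intInt_phi {u : ℝ → ℝ} {q : ℝ} (hq : 1 ≤ q) (hc : ContinuousOn u (Set.Icc (-1:ℝ) 1)) :
    IntervalIntegrable (fun x => |u x| ^ (q-1) * u x) volume (-1) 1 :=
  ((contOn_phi hq hc).mono (by rw [Set.uIcc_of_le (by norm_num : (-1:ℝ) ≤ 1)] :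
    Set.uIcc (-1:ℝ) 1 ⊆ Set.Icc (-1:ℝ) 1)).intervalIntegrable

lemma abs_phi (q : ℝ) (hq : 1 ≤ q) (y : ℝ) : |(|y| ^ (q-1) * y)| = |y| ^ q := by
  rcases eq_or_ne y 0 with h | h
  · rw [h]; simp [Real.zero_rpow (by linarith : q ≠ 0)]
  · rw [abs_mul, abs_of_nonneg (Real.rpow_nonneg (abs_nonneg y) _),
      ← Real.rpow_add_one (by simpa using h : |y| ≠ 0)]
    ring_nf

lemma int_uq_le {u g : ℝ → ℝ} {q : ℝ} (hq : q ∈ Set.Icc (1:ℝ) 2) (h : IsH10 u g)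
    (hC : 0 < ∫ x in (-1:ℝ)..1, (u x)^2) :
    ∫ x in (-1:ℝ)..1, |u x| ^ q ≤ 2 * ((∫ x in (-1:ℝ)..1, (u x)^2)/2) ^ (q/2) := by
  set C := ∫ x in (-1:ℝ)..1, (u x)^2 with hCdef
  set K := C/2 with hKdef
  have hK : 0 < K := by positivity
  set s := q/2 with hsdef
  have hs0 : 0 < s := by have := hq.1; positivity
  have hs1 : s ≤ 1 := by have := hq.2; linarith
  have hc := contOn h
  -- pointwise bound
  have hpt : ∀ x ∈ Set.Icc (-1:ℝ) 1,
      |u x| ^ q ≤ (s * (u x)^2 + (1-s)*K) * K ^ (s-1) := by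
    intro x _
    have hgm := Real.geom_mean_le_arith_mean2_weighted (w₁ := s) (w₂ := 1-s)
      (p₁ := (u x)^2) (p₂ := K) (le_of_lt hs0) (by linarith)
      (sq_nonneg (u x)) (le_of_lt hK) (by ring)
    have hxq : |u x| ^ q = ((u x)^2) ^ s := by
      rw [← sq_abs (u x), ← Real.rpow_natCast |u x| 2, ← Real.rpow_mul (abs_nonneg _)]
      congr 1
      push_cast
      rw [hsdef]; ring
    rw [hxq]
    have hKe : K ^ (1-s) * K ^ (s-1) = 1 := by
      rw [← Real.rpow_add hK]; norm_num
    calc ((u x)^2) ^ s = ((u x)^2) ^ s * (K ^ (1-s) * K ^ (s-1)) := by rw [hKe, mul_one]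
      _ = ((u x)^2) ^ s * K ^ (1-s) * K ^ (s-1) := by ring
      _ ≤ (s * (u x)^2 + (1-s)*K) * K ^ (s-1) :=
          mul_le_mul_of_nonneg_right hgm (Real.rpow_nonneg (le_of_lt hK) _)
  have hint1 : IntervalIntegrable (fun x => |u x| ^ q) volume (-1) 1 := intInt_uq hq.1 hc
  have hint2 : IntervalIntegrable (fun x => (s * (u x)^2 + (1-s)*K) * K ^ (s-1)) volume (-1) 1 := by
    apply IntervalIntegrable.mul_const
    apply IntervalIntegrable.add
    · exact (((hc.pow 2).mono (by rw [Set.uIcc_of_le (by norm_num : (-1:ℝ) ≤ 1)] :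
        Set.uIcc (-1:ℝ) 1 ⊆ Set.Icc (-1:ℝ) 1)).intervalIntegrable).const_mul s
    · exact intervalIntegrable_const
  have hmono := intervalIntegral.integral_mono_on (by norm_num : (-1:ℝ) ≤ 1) hint1 hint2 hpt
  have hcomp : ∫ x in (-1:ℝ)..1, (s * (u x)^2 + (1-s)*K) * K ^ (s-1)
      = (s * C + (1-s)*K*2) * K ^ (s-1) := by
    rw [intervalIntegral.integral_mul_const]
    congr 1
    rw [intervalIntegral.integral_add (f := fun x => s * (u x)^2)
      ((((hc.pow 2).mono (by rw [Set.uIcc_of_le (by norm_num : (-1:ℝ) ≤ 1)] :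
        Set.uIcc (-1:ℝ) 1 ⊆ Set.Icc (-1:ℝ) 1)).intervalIntegrable).const_mul s)
      intervalIntegrable_const,
      intervalIntegral.integral_const_mul, intervalIntegral.integral_const]
    norm_num; ring
  have heq : (s * C + (1-s)*K*2) * K ^ (s-1) = 2 * K ^ s := by
    have h1 : s * C + (1-s)*K*2 = 2*K := by rw [hKdef]; ring
    rw [h1, mul_assoc]
    congr 1
    calc K * K ^ (s-1) = K ^ (1:ℝ) * K ^ (s-1) := by rw [Real.rpow_one]
      _ = K ^ (1 + (s-1)) := (Real.rpow_add hK _ _).symm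
      _ = K ^ s := by ring_nf
  calc ∫ x in (-1:ℝ)..1, |u x| ^ q ≤ _ := hmono
    _ = 2 * K ^ s := by rw [hcomp, heq]

lemma T_bound {u g : ℝ → ℝ} {q : ℝ} (hq : q ∈ Set.Icc (1:ℝ) 2) (h : IsH10 u g)
    (hC : 0 < ∫ x in (-1:ℝ)..1, (u x)^2) :
    |∫ x in (-1:ℝ)..1, |u x| ^ (q - 1) * u x| ^ (2 / q)
      ≤ 2 ^ (2/q - 1) * ∫ x in (-1:ℝ)..1, (u x)^2 := by
  set C := ∫ x in (-1:ℝ)..1, (u x)^2 with hCdef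
  have hK : 0 < C/2 := by positivity
  have hq0 : (0:ℝ) < q := by linarith [hq.1]
  have habs : |∫ x in (-1:ℝ)..1, |u x| ^ (q - 1) * u x| ≤ ∫ x in (-1:ℝ)..1, |u x| ^ q := by
    calc |∫ x in (-1:ℝ)..1, |u x| ^ (q - 1) * u x|
        ≤ ∫ x in (-1:ℝ)..1, |(|u x| ^ (q - 1) * u x)| :=
          intervalIntegral.abs_integral_le_integral_abs (by norm_num)
      _ = ∫ x in (-1:ℝ)..1, |u x| ^ q := by
          apply intervalIntegral.integral_congr
          intro x _; exact abs_phi q hq.1 (u x)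
  have h2 : |∫ x in (-1:ℝ)..1, |u x| ^ (q - 1) * u x| ≤ 2 * (C/2) ^ (q/2) :=
    le_trans habs (int_uq_le hq h hC)
  calc |∫ x in (-1:ℝ)..1, |u x| ^ (q - 1) * u x| ^ (2/q)
      ≤ (2 * (C/2) ^ (q/2)) ^ (2/q) :=
        Real.rpow_le_rpow (abs_nonneg _) h2 (by positivity)
    _ = 2 ^ (2/q) * ((C/2) ^ (q/2)) ^ (2/q) := by
        rw [Real.mul_rpow (by norm_num) (Real.rpow_nonneg (le_of_lt hK) _)]
    _ = 2 ^ (2/q) * (C/2) := by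
        rw [← Real.rpow_mul (le_of_lt hK), show q/2*(2/q) = 1 by field_simp, Real.rpow_one]
    _ = 2 ^ (2/q - 1) * C := by
        rw [Real.rpow_sub (by norm_num : (0:ℝ) < 2), Real.rpow_one]
        ring


lemma Q_lower {α q : ℝ} (hq : q ∈ Set.Icc (1:ℝ) 2) {u g : ℝ → ℝ}
    (h : IsH10 u g) (hnt : Nontriv u) :
    -(|α| * 2 ^ (2/q - 1)) ≤ Qfun α q u g := by
  have hC := denom_pos h hnt
  have hD : 0 ≤ ∫ x in (-1:ℝ)..1, (g x)^2 :=
    intervalIntegral.integral_nonneg (by norm_num) (fun x _ => sq_nonneg _)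
  set T := |∫ x in (-1:ℝ)..1, |u x| ^ (q - 1) * u x| ^ (2/q) with hT
  have hT0 : 0 ≤ T := Real.rpow_nonneg (abs_nonneg _) _
  have hTb := T_bound hq h hC
  rw [Qfun, le_div_iff₀ hC]
  have h1 : α * T ≥ -|α| * T := by nlinarith [neg_abs_le α]
  have h2 : -|α| * T ≥ -|α| * (2 ^ (2/q-1) * ∫ x in (-1:ℝ)..1, (u x)^2) := by
    apply mul_le_mul_of_nonpos_left hTb (by simp [abs_nonneg] : -|α| ≤ 0)
  nlinarith

lemma bddBelow_Sset (q : ℝ) (hq : q ∈ Set.Icc (1:ℝ) 2) (α : ℝ) : BddBelow (Sset α q) := by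
  refine ⟨-(|α| * 2 ^ (2/q - 1)), ?_⟩
  rintro v ⟨u, g, h, hnt, hQ⟩
  rw [← hQ]
  exact Q_lower hq h hnt

lemma lam_le_Qfun {q : ℝ} (hq : q ∈ Set.Icc (1:ℝ) 2) (α : ℝ) {u g : ℝ → ℝ}
    (h : IsH10 u g) (hnt : Nontriv u) : lam α q ≤ Qfun α q u g := by
  rw [lam_eq]
  exact csInf_le (bddBelow_Sset q hq α) ⟨u, g, h, hnt, rfl⟩

/-- the cosine competitor -/
def ucos : ℝ → ℝ := fun x => Real.cos (π/2 * x)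

def gcos : ℝ → ℝ := fun x => -(π/2 * Real.sin (π/2 * x))

lemma hasDerivAt_ucos (x : ℝ) : HasDerivAt ucos (gcos x) x := by
  have h1 : HasDerivAt (fun t : ℝ => π/2 * t) (π/2) x := by
    simpa using (hasDerivAt_id x).const_mul (π/2)
  have := h1.cos
  unfold ucos gcos
  convert this using 1
  ring

lemma cont_gcos : Continuous gcos := by
  unfold gcos; continuity

lemma isH10_ucos : IsH10 ucos gcos := by
  have hint : IntervalIntegrable gcos volume (-1) 1 := cont_gcos.intervalIntegrable _ _
  refine ⟨hint, ?_, ?_, ?_⟩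
  · haveI : IsFiniteMeasure (volume.restrict (Set.Ioo (-1:ℝ) 1)) := by
      constructor
      rw [Measure.restrict_apply_univ, Real.volume_Ioo]
      exact ENNReal.ofReal_lt_top
    refine MemLp.of_bound (cont_gcos.aestronglyMeasurable) (π/2) ?_
    apply Filter.Eventually.of_forall
    intro x
    rw [gcos, Real.norm_eq_abs, abs_neg, abs_mul]
    have h1 : |Real.sin (π/2 * x)| ≤ 1 := Real.abs_sin_le_one _
    have h2 : |π/2| = π/2 := abs_of_nonneg (by positivity)
    nlinarith [abs_nonneg (Real.sin (π/2*x)), Real.pi_pos]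
  · intro x _
    have := intervalIntegral.integral_eq_sub_of_hasDerivAt
      (f := ucos) (f' := gcos) (a := (-1:ℝ)) (b := x)
      (fun t _ => hasDerivAt_ucos t) (cont_gcos.intervalIntegrable _ _)
    rw [this]
    have : ucos (-1) = 0 := by
      unfold ucos
      rw [show π/2 * (-1) = -(π/2) by ring, Real.cos_neg, Real.cos_pi_div_two]
    rw [this, sub_zero]
  · show Real.cos (π/2 * 1) = 0
    rw [mul_one, Real.cos_pi_div_two]

lemma nontriv_ucos : Nontriv ucos := by
  refine ⟨0, by constructor <;> norm_num, ?_⟩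
  simp [ucos]

lemma integral_cos_sq : ∫ x in (-1:ℝ)..1, (ucos x)^2 = 1 := by
  have hd : ∀ x ∈ Set.uIcc (-1:ℝ) 1, HasDerivAt (fun t => t/2 + Real.sin (π*t)/(2*π))
      ((ucos x)^2) x := by
    intro x _
    have h1 : HasDerivAt (fun t : ℝ => t/2) (1/2) x := by
      simpa using (hasDerivAt_id x).div_const 2
    have h2 : HasDerivAt (fun t : ℝ => π * t) π x := by
      simpa using (hasDerivAt_id x).const_mul π
    have h3 := (h2.sin).div_const (2*π)
    have h4 := h1.fun_add h3
    refine h4.congr_deriv ?_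
    symm
    rw [ucos, Real.cos_sq]
    have hπ : π ≠ 0 := ne_of_gt Real.pi_pos
    field_simp
  have hint : IntervalIntegrable (fun x => (ucos x)^2) volume (-1) 1 := by
    apply Continuous.intervalIntegrable
    unfold ucos; continuity
  rw [intervalIntegral.integral_eq_sub_of_hasDerivAt hd hint,
    show π * (-1:ℝ) = -π by ring, Real.sin_neg, Real.sin_pi, mul_one]
  norm_num

lemma integral_gcos_sq : ∫ x in (-1:ℝ)..1, (gcos x)^2 = π^2/4 := by
  have hd : ∀ x ∈ Set.uIcc (-1:ℝ) 1, HasDerivAt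
      (fun t => π^2/4 * (t/2 - Real.sin (π*t)/(2*π))) ((gcos x)^2) x := by
    intro x _
    have h1 : HasDerivAt (fun t : ℝ => t/2) (1/2) x := by
      simpa using (hasDerivAt_id x).div_const 2
    have h2 : HasDerivAt (fun t : ℝ => π * t) π x := by
      simpa using (hasDerivAt_id x).const_mul π
    have h3 := (h2.sin).div_const (2*π)
    have h4 := (h1.fun_sub h3).const_mul (π^2/4)
    refine h4.congr_deriv ?_
    symm
    have hsq : (gcos x)^2 = π^2/4 * (Real.sin (π/2*x))^2 := by rw [gcos]; ring
    rw [hsq, Real.sin_sq, Real.cos_sq]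
    have hπ : π ≠ 0 := ne_of_gt Real.pi_pos
    field_simp
    ring_nf
  have hint : IntervalIntegrable (fun x => (gcos x)^2) volume (-1) 1 := by
    apply Continuous.intervalIntegrable
    unfold gcos; continuity
  rw [intervalIntegral.integral_eq_sub_of_hasDerivAt hd hint,
    show π * (-1:ℝ) = -π by ring, Real.sin_neg, Real.sin_pi, mul_one]
  norm_num
  ring

lemma integral_phi_ucos_pos {q : ℝ} (hq : q ∈ Set.Icc (1:ℝ) 2) :
    0 < ∫ x in (-1:ℝ)..1, |ucos x| ^ (q-1) * ucos x := by
  have hcont : Continuous ucos := by unfold ucos; continuity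
  apply intervalIntegral.intervalIntegral_pos_of_pos_on
    (intInt_phi hq.1 hcont.continuousOn)
  · intro x hx
    have hc : 0 < ucos x := by
      apply Real.cos_pos_of_mem_Ioo
      constructor
      · nlinarith [hx.1, Real.pi_pos]
      · nlinarith [hx.2, Real.pi_pos]
    have : 0 < |ucos x| ^ (q-1) := Real.rpow_pos_of_pos (abs_pos.mpr (ne_of_gt hc)) _
    positivity
  · norm_num

lemma lam_le_line {q : ℝ} (hq : q ∈ Set.Icc (1:ℝ) 2) :
    ∃ J : ℝ, 0 < J ∧ ∀ α : ℝ, lam α q ≤ π^2/4 + α * J := by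
  set Iq := ∫ x in (-1:ℝ)..1, |ucos x| ^ (q-1) * ucos x with hIq
  have hIpos := integral_phi_ucos_pos hq
  refine ⟨Iq ^ (2/q), Real.rpow_pos_of_pos hIpos _, fun α => ?_⟩
  have h := lam_le_Qfun hq α isH10_ucos nontriv_ucos
  rw [Qfun, integral_cos_sq, integral_gcos_sq, ← hIq, abs_of_pos hIpos] at h
  simpa using h


lemma part2 {q : ℝ} (hq : q ∈ Set.Icc (1:ℝ) 2) :
    Tendsto (fun α => lam α q) atBot atBot := by
  obtain ⟨J, hJ, hline⟩ := lam_le_line hq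
  exact tendsto_atBot_mono hline
    (tendsto_atBot_add_const_left _ _ (tendsto_id.atBot_mul_const hJ))

section Flip

variable {u g : ℝ → ℝ} {c₁ c₂ : ℝ}

/-- derivative with sign flipped on `(c₁, c₂]` -/
def flipg (g : ℝ → ℝ) (c₁ c₂ : ℝ) : ℝ → ℝ :=
  fun t => if t ∈ Set.Ioc c₁ c₂ then -g t else g t

def flipu (g : ℝ → ℝ) (c₁ c₂ : ℝ) : ℝ → ℝ :=
  fun x => ∫ t in (-1:ℝ)..x, flipg g c₁ c₂ t

lemma flipg_eq (g : ℝ → ℝ) (c₁ c₂ : ℝ) :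
    flipg g c₁ c₂ = fun t => g t - 2 * Set.indicator (Set.Ioc c₁ c₂) g t := by
  funext t
  unfold flipg
  by_cases ht : t ∈ Set.Ioc c₁ c₂
  · rw [if_pos ht, Set.indicator_of_mem ht]; ring
  · rw [if_neg ht, Set.indicator_of_notMem ht]; ring

lemma flipg_intInt (h : IntervalIntegrable g volume (-1) 1) :
    IntervalIntegrable (flipg g c₁ c₂) volume (-1) 1 := by
  rw [flipg_eq]
  apply IntervalIntegrable.sub h
  rw [intervalIntegrable_iff] at h ⊢
  exact (h.indicator measurableSet_Ioc).const_mul 2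

lemma flipg_memLp (h : MemLp g 2 (volume.restrict (Set.Ioo (-1 : ℝ) 1))) :
    MemLp (flipg g c₁ c₂) 2 (volume.restrict (Set.Ioo (-1 : ℝ) 1)) := by
  rw [flipg_eq]
  exact h.sub ((h.indicator measurableSet_Ioc).const_mul 2)

lemma flip_val_left (h : IsH10 u g) {x : ℝ}
    (hx : x ∈ Set.Icc (-1:ℝ) 1) (hxc : x ≤ c₁) : flipu g c₁ c₂ x = u x := by
  unfold flipu
  have he : ∫ t in (-1:ℝ)..x, flipg g c₁ c₂ t = ∫ t in (-1:ℝ)..x, g t := by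
    apply intervalIntegral.integral_congr
    intro t ht
    rw [Set.uIcc_of_le (by linarith [hx.1] : (-1:ℝ) ≤ x)] at ht
    have : ¬ (t ∈ Set.Ioc c₁ c₂) := fun hmem => absurd hmem.1 (by linarith [ht.2])
    exact if_neg this
  rw [he, ← h.2.2.1 x hx]

lemma flip_val_mid (h : IsH10 u g) (hc₁ : c₁ ∈ Set.Icc (-1:ℝ) 1)
    (hz1 : u c₁ = 0) {x : ℝ} (hx : x ∈ Set.Icc (-1:ℝ) 1) (hc₁x : c₁ ≤ x) (hxc₂ : x ≤ c₂) :
    flipu g c₁ c₂ x = -u x := by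
  have hint := flipg_intInt (c₁ := c₁) (c₂ := c₂) h.1
  have h1 : IntervalIntegrable (flipg g c₁ c₂) volume (-1) c₁ :=
    sub_intInt hint (by constructor <;> norm_num) hc₁
  have h2 : IntervalIntegrable (flipg g c₁ c₂) volume c₁ x := sub_intInt hint hc₁ hx
  have hadd := intervalIntegral.integral_add_adjacent_intervals h1 h2
  have e1 : ∫ t in (-1:ℝ)..c₁, flipg g c₁ c₂ t = u c₁ :=
    flip_val_left h hc₁ le_rfl
  have e2 : ∫ t in c₁..x, flipg g c₁ c₂ t = -(u x - u c₁) := by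
    have hae : ∀ᵐ t : ℝ, t ∈ Set.uIoc c₁ x → flipg g c₁ c₂ t = -g t := by
      apply Filter.Eventually.of_forall
      intro t ht
      rw [Set.uIoc_of_le hc₁x] at ht
      exact if_pos ⟨ht.1, le_trans ht.2 hxc₂⟩
    rw [intervalIntegral.integral_congr_ae hae, intervalIntegral.integral_neg,
      primitive_sub h hc₁ hx]
  show (∫ t in (-1:ℝ)..x, flipg g c₁ c₂ t) = -u x
  rw [← hadd, e1, e2, hz1]
  ring

lemma flip_val_right (h : IsH10 u g) (hc₁ : c₁ ∈ Set.Icc (-1:ℝ) 1) (hc₂ : c₂ ∈ Set.Icc (-1:ℝ) 1)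
    (hc : c₁ ≤ c₂) (hz1 : u c₁ = 0) (hz2 : u c₂ = 0) {x : ℝ}
    (hx : x ∈ Set.Icc (-1:ℝ) 1) (hc₂x : c₂ ≤ x) : flipu g c₁ c₂ x = u x := by
  have hint := flipg_intInt (c₁ := c₁) (c₂ := c₂) h.1
  have h1 : IntervalIntegrable (flipg g c₁ c₂) volume (-1) c₂ :=
    sub_intInt hint (by constructor <;> norm_num) hc₂
  have h2 : IntervalIntegrable (flipg g c₁ c₂) volume c₂ x := sub_intInt hint hc₂ hx
  have hadd := intervalIntegral.integral_add_adjacent_intervals h1 h2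
  have e1 : ∫ t in (-1:ℝ)..c₂, flipg g c₁ c₂ t = -u c₂ :=
    flip_val_mid h hc₁ hz1 hc₂ hc le_rfl
  have e2 : ∫ t in c₂..x, flipg g c₁ c₂ t = u x - u c₂ := by
    have hae : ∀ᵐ t : ℝ, t ∈ Set.uIoc c₂ x → flipg g c₁ c₂ t = g t := by
      apply Filter.Eventually.of_forall
      intro t ht
      rw [Set.uIoc_of_le hc₂x] at ht
      exact if_neg (fun hmem => absurd hmem.2 (by push_neg; exact ht.1))
    rw [intervalIntegral.integral_congr_ae hae, primitive_sub h hc₂ hx]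
  show (∫ t in (-1:ℝ)..x, flipg g c₁ c₂ t) = u x
  rw [← hadd, e1, e2, hz2]
  ring

lemma flip_sq (h : IsH10 u g) (hc₁ : c₁ ∈ Set.Icc (-1:ℝ) 1) (hc₂ : c₂ ∈ Set.Icc (-1:ℝ) 1)
    (hc : c₁ ≤ c₂) (hz1 : u c₁ = 0) (hz2 : u c₂ = 0) {x : ℝ}
    (hx : x ∈ Set.Icc (-1:ℝ) 1) : (flipu g c₁ c₂ x)^2 = (u x)^2 := by
  rcases le_total x c₁ with h1 | h1
  · rw [flip_val_left h hx h1]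
  rcases le_total x c₂ with h2 | h2
  · rw [flip_val_mid h hc₁ hz1 hx h1 h2]; ring
  · rw [flip_val_right h hc₁ hc₂ hc hz1 hz2 hx h2]

lemma flip_isH10 (h : IsH10 u g) (hc₁ : c₁ ∈ Set.Icc (-1:ℝ) 1) (hc₂ : c₂ ∈ Set.Icc (-1:ℝ) 1)
    (hc : c₁ ≤ c₂) (hz1 : u c₁ = 0) (hz2 : u c₂ = 0) :
    IsH10 (flipu g c₁ c₂) (flipg g c₁ c₂) := by
  refine ⟨flipg_intInt h.1, flipg_memLp h.2.1, fun x _ => rfl, ?_⟩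
  rw [flip_val_right h hc₁ hc₂ hc hz1 hz2 (by constructor <;> norm_num) hc₂.2]
  exact h.2.2.2

lemma flip_nontriv (h : IsH10 u g) (hc₁ : c₁ ∈ Set.Icc (-1:ℝ) 1) (hc₂ : c₂ ∈ Set.Icc (-1:ℝ) 1)
    (hc : c₁ ≤ c₂) (hz1 : u c₁ = 0) (hz2 : u c₂ = 0) (hnt : Nontriv u) :
    Nontriv (flipu g c₁ c₂) := by
  obtain ⟨x, hx, hux⟩ := hnt
  refine ⟨x, hx, ?_⟩
  intro h0
  apply hux
  have := flip_sq h hc₁ hc₂ hc hz1 hz2 hx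
  rw [h0] at this
  nlinarith [sq_nonneg (u x)]

lemma flip_gsq : ∫ x in (-1:ℝ)..1, (flipg g c₁ c₂ x)^2 = ∫ x in (-1:ℝ)..1, (g x)^2 := by
  apply intervalIntegral.integral_congr
  intro t _
  show (if t ∈ Set.Ioc c₁ c₂ then -g t else g t)^2 = (g t)^2
  split_ifs <;> ring

lemma flip_usq (h : IsH10 u g) (hc₁ : c₁ ∈ Set.Icc (-1:ℝ) 1) (hc₂ : c₂ ∈ Set.Icc (-1:ℝ) 1)
    (hc : c₁ ≤ c₂) (hz1 : u c₁ = 0) (hz2 : u c₂ = 0) :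
    ∫ x in (-1:ℝ)..1, (flipu g c₁ c₂ x)^2 = ∫ x in (-1:ℝ)..1, (u x)^2 := by
  apply intervalIntegral.integral_congr
  intro t ht
  rw [Set.uIcc_of_le (by norm_num : (-1:ℝ) ≤ 1)] at ht
  exact flip_sq h hc₁ hc₂ hc hz1 hz2 ht

lemma phi_odd {q : ℝ} (v : ℝ) : |(-v)| ^ (q-1) * (-v) = -(|v| ^ (q-1) * v) := by
  rw [abs_neg]; ring

lemma flip_I {q : ℝ} (hq : 1 ≤ q) (h : IsH10 u g)
    (hc₁ : c₁ ∈ Set.Icc (-1:ℝ) 1) (hc₂ : c₂ ∈ Set.Icc (-1:ℝ) 1)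
    (hc : c₁ ≤ c₂) (hz1 : u c₁ = 0) (hz2 : u c₂ = 0) :
    ∫ x in (-1:ℝ)..1, |flipu g c₁ c₂ x| ^ (q-1) * flipu g c₁ c₂ x
      = (∫ x in (-1:ℝ)..1, |u x| ^ (q-1) * u x)
        - 2 * ∫ x in c₁..c₂, |u x| ^ (q-1) * u x := by
  have hIcc : Set.uIcc (-1:ℝ) 1 = Set.Icc (-1:ℝ) 1 := Set.uIcc_of_le (by norm_num)
  have hcu : ContinuousOn u (Set.Icc (-1:ℝ) 1) := contOn h
  have hcfu : ContinuousOn (flipu g c₁ c₂) (Set.Icc (-1:ℝ) 1) := by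
    have h1 : IntegrableOn (flipg g c₁ c₂) (Set.uIcc (-1 : ℝ) 1) volume := by
      rw [hIcc]; exact intInt_IccOn (by norm_num) (flipg_intInt h.1)
    have h2 := intervalIntegral.continuousOn_primitive_interval h1
    rw [hIcc] at h2
    exact h2
  have hiu : IntervalIntegrable (fun x => |u x| ^ (q-1) * u x) volume (-1) 1 :=
    intInt_phi hq hcu
  have hifu : IntervalIntegrable (fun x => |flipu g c₁ c₂ x| ^ (q-1) * flipu g c₁ c₂ x)
      volume (-1) 1 := intInt_phi hq hcfu
  have m1 : (-1:ℝ) ∈ Set.Icc (-1:ℝ) 1 := by constructor <;> norm_num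
  have m2 : (1:ℝ) ∈ Set.Icc (-1:ℝ) 1 := by constructor <;> norm_num
  have s1u := sub_intInt hiu m1 hc₁
  have s2u := sub_intInt hiu hc₁ hc₂
  have s3u := sub_intInt hiu hc₂ m2
  have s1f := sub_intInt hifu m1 hc₁
  have s2f := sub_intInt hifu hc₁ hc₂
  have s3f := sub_intInt hifu hc₂ m2
  have hsplitu : (∫ x in (-1:ℝ)..1, |u x| ^ (q-1) * u x)
      = (∫ x in (-1:ℝ)..c₁, |u x| ^ (q-1) * u x) + (∫ x in c₁..c₂, |u x| ^ (q-1) * u x)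
        + (∫ x in c₂..1, |u x| ^ (q-1) * u x) := by
    rw [intervalIntegral.integral_add_adjacent_intervals s1u s2u,
      intervalIntegral.integral_add_adjacent_intervals (s1u.trans s2u) s3u]
  have hsplitf : (∫ x in (-1:ℝ)..1, |flipu g c₁ c₂ x| ^ (q-1) * flipu g c₁ c₂ x)
      = (∫ x in (-1:ℝ)..c₁, |flipu g c₁ c₂ x| ^ (q-1) * flipu g c₁ c₂ x)
        + (∫ x in c₁..c₂, |flipu g c₁ c₂ x| ^ (q-1) * flipu g c₁ c₂ x)
        + (∫ x in c₂..1, |flipu g c₁ c₂ x| ^ (q-1) * flipu g c₁ c₂ x) := by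
    rw [intervalIntegral.integral_add_adjacent_intervals s1f s2f,
      intervalIntegral.integral_add_adjacent_intervals (s1f.trans s2f) s3f]
  have p1 : (∫ x in (-1:ℝ)..c₁, |flipu g c₁ c₂ x| ^ (q-1) * flipu g c₁ c₂ x)
      = ∫ x in (-1:ℝ)..c₁, |u x| ^ (q-1) * u x := by
    apply intervalIntegral.integral_congr
    intro t ht
    rw [Set.uIcc_of_le hc₁.1] at ht
    show |flipu g c₁ c₂ t| ^ (q-1) * flipu g c₁ c₂ t = |u t| ^ (q-1) * u t
    rw [flip_val_left h ⟨ht.1, le_trans ht.2 hc₁.2⟩ ht.2]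
  have p2 : (∫ x in c₁..c₂, |flipu g c₁ c₂ x| ^ (q-1) * flipu g c₁ c₂ x)
      = -∫ x in c₁..c₂, |u x| ^ (q-1) * u x := by
    rw [← intervalIntegral.integral_neg]
    apply intervalIntegral.integral_congr
    intro t ht
    rw [Set.uIcc_of_le hc] at ht
    show |flipu g c₁ c₂ t| ^ (q-1) * flipu g c₁ c₂ t = -(|u t| ^ (q-1) * u t)
    rw [flip_val_mid h hc₁ hz1 ⟨le_trans hc₁.1 ht.1, le_trans ht.2 hc₂.2⟩ ht.1 ht.2]
    exact phi_odd (u t)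
  have p3 : (∫ x in c₂..1, |flipu g c₁ c₂ x| ^ (q-1) * flipu g c₁ c₂ x)
      = ∫ x in c₂..1, |u x| ^ (q-1) * u x := by
    apply intervalIntegral.integral_congr
    intro t ht
    rw [Set.uIcc_of_le hc₂.2] at ht
    show |flipu g c₁ c₂ t| ^ (q-1) * flipu g c₁ c₂ t = |u t| ^ (q-1) * u t
    rw [flip_val_right h hc₁ hc₂ hc hz1 hz2 ⟨le_trans hc₂.1 ht.1, ht.2⟩ ht.1]
  rw [hsplitf, p1, p2, p3, hsplitu]
  ring

end Flip

section Component

lemma exists_component_neg {u : ℝ → ℝ} (hc : ContinuousOn u (Set.Icc (-1:ℝ) 1))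
    (h0 : u (-1) = 0) (h1 : u 1 = 0) {p : ℝ} (hp : p ∈ Set.Icc (-1:ℝ) 1) (hup : u p < 0) :
    ∃ c₁ c₂ : ℝ, c₁ ∈ Set.Icc (-1:ℝ) 1 ∧ c₂ ∈ Set.Icc (-1:ℝ) 1 ∧ c₁ < c₂ ∧
      u c₁ = 0 ∧ u c₂ = 0 ∧ ∀ x ∈ Set.Ioo c₁ c₂, u x < 0 := by
  set Z₁ : Set ℝ := Set.Icc (-1) p ∩ u ⁻¹' {0} with hZ₁
  set Z₂ : Set ℝ := Set.Icc p 1 ∩ u ⁻¹' {0} with hZ₂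
  have hZ₁c : IsClosed Z₁ :=
    (hc.mono (Set.Icc_subset_Icc le_rfl hp.2)).preimage_isClosed_of_isClosed
      isClosed_Icc isClosed_singleton
  have hZ₂c : IsClosed Z₂ :=
    (hc.mono (Set.Icc_subset_Icc hp.1 le_rfl)).preimage_isClosed_of_isClosed
      isClosed_Icc isClosed_singleton
  have hZ₁ne : Z₁.Nonempty := ⟨-1, ⟨le_rfl, hp.1⟩, h0⟩
  have hZ₂ne : Z₂.Nonempty := ⟨1, ⟨hp.2, le_rfl⟩, h1⟩
  have hZ₁bdd : BddAbove Z₁ := ⟨p, fun x hx => hx.1.2⟩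
  have hZ₂bdd : BddBelow Z₂ := ⟨p, fun x hx => hx.1.1⟩
  set c₁ := sSup Z₁ with hc₁def
  set c₂ := sInf Z₂ with hc₂def
  have hm₁ : c₁ ∈ Z₁ := hZ₁c.csSup_mem hZ₁ne hZ₁bdd
  have hm₂ : c₂ ∈ Z₂ := hZ₂c.csInf_mem hZ₂ne hZ₂bdd
  have hz₁ : u c₁ = 0 := hm₁.2
  have hz₂ : u c₂ = 0 := hm₂.2
  have hc₁p : c₁ < p := lt_of_le_of_ne hm₁.1.2 (fun h => by rw [h] at hz₁; linarith)
  have hpc₂ : p < c₂ := lt_of_le_of_ne hm₂.1.1 (fun h => by rw [← h] at hz₂; linarith)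
  have hI₁ : c₁ ∈ Set.Icc (-1:ℝ) 1 := ⟨hm₁.1.1, le_trans hm₁.1.2 hp.2⟩
  have hI₂ : c₂ ∈ Set.Icc (-1:ℝ) 1 := ⟨le_trans hp.1 hm₂.1.1, hm₂.1.2⟩
  refine ⟨c₁, c₂, hI₁, hI₂, lt_trans hc₁p hpc₂, hz₁, hz₂, ?_⟩
  intro x hx
  by_contra hge
  push_neg at hge
  rcases le_total x p with hxp | hpx
  · -- x ≤ p, c₁ < x
    rcases eq_or_lt_of_le hge with he | hlt
    · exact absurd (le_csSup hZ₁bdd ⟨⟨le_trans hI₁.1 hx.1.le, hxp⟩, he.symm⟩)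
        (not_le.mpr hx.1)
    · have hxp' : x < p := lt_of_le_of_ne hxp (fun h => by rw [h] at hlt; linarith)
      have := intermediate_value_Ioo' hxp
        (hc.mono (Set.Icc_subset_Icc (le_trans hI₁.1 hx.1.le) hp.2))
      obtain ⟨z, hz, hz0⟩ := this (by constructor <;> [exact hup; exact hlt] :
        (0:ℝ) ∈ Set.Ioo (u p) (u x))
      exact absurd (le_csSup hZ₁bdd ⟨⟨le_trans hI₁.1 (le_trans hx.1.le hz.1.le), hz.2.le⟩, hz0⟩)
        (not_le.mpr (lt_trans hx.1 hz.1))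
  · rcases eq_or_lt_of_le hge with he | hlt
    · exact absurd (csInf_le hZ₂bdd ⟨⟨hpx, le_trans hx.2.le hI₂.2⟩, he.symm⟩)
        (not_le.mpr hx.2)
    · have := intermediate_value_Ioo hpx
        (hc.mono (Set.Icc_subset_Icc hp.1 (le_trans hx.2.le hI₂.2)))
      obtain ⟨z, hz, hz0⟩ := this (by constructor <;> [exact hup; exact hlt] :
        (0:ℝ) ∈ Set.Ioo (u p) (u x))
      exact absurd (csInf_le hZ₂bdd ⟨⟨hz.1.le, le_trans hz.2.le (le_trans hx.2.le hI₂.2)⟩, hz0⟩)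
        (not_le.mpr (lt_trans hz.2 hx.2))

lemma exists_component_pos {u : ℝ → ℝ} (hc : ContinuousOn u (Set.Icc (-1:ℝ) 1))
    (h0 : u (-1) = 0) (h1 : u 1 = 0) {p : ℝ} (hp : p ∈ Set.Icc (-1:ℝ) 1) (hup : 0 < u p) :
    ∃ c₁ c₂ : ℝ, c₁ ∈ Set.Icc (-1:ℝ) 1 ∧ c₂ ∈ Set.Icc (-1:ℝ) 1 ∧ c₁ < c₂ ∧
      u c₁ = 0 ∧ u c₂ = 0 ∧ ∀ x ∈ Set.Ioo c₁ c₂, 0 < u x := by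
  obtain ⟨c₁, c₂, m₁, m₂, hlt, z₁, z₂, hneg⟩ :=
    exists_component_neg (u := fun x => -u x) (hc.neg) (by simp [h0]) (by simp [h1]) hp
      (by simpa using hup)
  exact ⟨c₁, c₂, m₁, m₂, hlt, by simpa using z₁, by simpa using z₂,
    fun x hx => by simpa using hneg x hx⟩

lemma mid_neg {u : ℝ → ℝ} {q c₁ c₂ : ℝ} (hq : 1 ≤ q) (hc : ContinuousOn u (Set.Icc (-1:ℝ) 1))
    (hint : IntervalIntegrable (fun x => |u x| ^ (q-1) * u x) volume (-1) 1)
    (m₁ : c₁ ∈ Set.Icc (-1:ℝ) 1) (m₂ : c₂ ∈ Set.Icc (-1:ℝ) 1) (hlt : c₁ < c₂)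
    (hneg : ∀ x ∈ Set.Ioo c₁ c₂, u x < 0) :
    ∫ x in c₁..c₂, |u x| ^ (q-1) * u x < 0 := by
  have hpos : 0 < ∫ x in c₁..c₂, -(|u x| ^ (q-1) * u x) := by
    apply intervalIntegral.intervalIntegral_pos_of_pos_on ((sub_intInt hint m₁ m₂).neg)
    · intro x hx
      have h1 := hneg x hx
      have h2 : 0 < |u x| ^ (q-1) := Real.rpow_pos_of_pos (abs_pos.mpr (ne_of_lt h1)) _
      simp only [Pi.neg_apply]
      nlinarith
    · exact hlt
  rw [intervalIntegral.integral_neg] at hpos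
  linarith

lemma mid_pos {u : ℝ → ℝ} {q c₁ c₂ : ℝ} (hq : 1 ≤ q) (hc : ContinuousOn u (Set.Icc (-1:ℝ) 1))
    (hint : IntervalIntegrable (fun x => |u x| ^ (q-1) * u x) volume (-1) 1)
    (m₁ : c₁ ∈ Set.Icc (-1:ℝ) 1) (m₂ : c₂ ∈ Set.Icc (-1:ℝ) 1) (hlt : c₁ < c₂)
    (hpos : ∀ x ∈ Set.Ioo c₁ c₂, 0 < u x) :
    0 < ∫ x in c₁..c₂, |u x| ^ (q-1) * u x := by
  apply intervalIntegral.intervalIntegral_pos_of_pos_on (sub_intInt hint m₁ m₂)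
  · intro x hx
    have h1 := hpos x hx
    have h2 : 0 < |u x| ^ (q-1) := Real.rpow_pos_of_pos (abs_pos.mpr (ne_of_gt h1)) _
    nlinarith
  · exact hlt

end Component

lemma part1_neg {α q : ℝ} (hq : q ∈ Set.Icc (1:ℝ) 2) (hα : α < 0) {u g : ℝ → ℝ}
    (hmin : IsMinimizer α q u g) :
    (∀ x ∈ Set.Icc (-1:ℝ) 1, 0 ≤ u x) ∨ (∀ x ∈ Set.Icc (-1:ℝ) 1, u x ≤ 0) := by
  by_contra hcon
  push_neg at hcon
  obtain ⟨⟨p, hp, hup⟩, ⟨r, hr, hur⟩⟩ := hcon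
  obtain ⟨h10, hnt, hQ⟩ := hmin
  have hC := denom_pos h10 hnt
  have hcu := contOn h10
  have hint := intInt_phi hq.1 hcu
  have key : ∃ c₁ c₂ : ℝ, ∃ (_ : c₁ ∈ Set.Icc (-1:ℝ) 1) (_ : c₂ ∈ Set.Icc (-1:ℝ) 1)
      (_ : c₁ < c₂) (_ : u c₁ = 0) (_ : u c₂ = 0),
      |∫ x in (-1:ℝ)..1, |u x| ^ (q-1) * u x|
        < |(∫ x in (-1:ℝ)..1, |u x| ^ (q-1) * u x)
            - 2 * ∫ x in c₁..c₂, |u x| ^ (q-1) * u x| := by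
    rcases le_or_gt 0 (∫ x in (-1:ℝ)..1, |u x| ^ (q-1) * u x) with hI | hI
    · obtain ⟨c₁, c₂, m₁, m₂, hlt, z₁, z₂, hneg⟩ :=
        exists_component_neg hcu (u_neg_one h10) h10.2.2.2 hp hup
      have hmid := mid_neg hq.1 hcu hint m₁ m₂ hlt hneg
      refine ⟨c₁, c₂, m₁, m₂, hlt, z₁, z₂, ?_⟩
      rw [abs_of_nonneg hI, abs_of_nonneg (by linarith)]
      linarith
    · obtain ⟨c₁, c₂, m₁, m₂, hlt, z₁, z₂, hpos⟩ :=
        exists_component_pos hcu (u_neg_one h10) h10.2.2.2 hr hur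
      have hmid := mid_pos hq.1 hcu hint m₁ m₂ hlt hpos
      refine ⟨c₁, c₂, m₁, m₂, hlt, z₁, z₂, ?_⟩
      rw [abs_of_nonpos (le_of_lt hI), abs_of_nonpos (by linarith)]
      linarith
  obtain ⟨c₁, c₂, m₁, m₂, hlt, z₁, z₂, habs⟩ := key
  have h10' := flip_isH10 h10 m₁ m₂ hlt.le z₁ z₂
  have hnt' := flip_nontriv h10 m₁ m₂ hlt.le z₁ z₂ hnt
  have hle := lam_le_Qfun hq α h10' hnt'
  rw [Qfun, flip_gsq, flip_usq h10 m₁ m₂ hlt.le z₁ z₂,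
    flip_I hq.1 h10 m₁ m₂ hlt.le z₁ z₂] at hle
  rw [Qfun] at hQ
  have hq0 : (0:ℝ) < 2/q := by have := hq.1; positivity
  have hsm := Real.rpow_lt_rpow (abs_nonneg _) habs hq0
  have hnum := mul_lt_mul_of_neg_left hsm hα
  have hdiv : ((∫ x in (-1:ℝ)..1, (g x)^2)
        + α * |(∫ x in (-1:ℝ)..1, |u x| ^ (q-1) * u x)
            - 2 * ∫ x in c₁..c₂, |u x| ^ (q-1) * u x| ^ (2/q))
        / (∫ x in (-1:ℝ)..1, (u x)^2)
      < ((∫ x in (-1:ℝ)..1, (g x)^2)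
        + α * |∫ x in (-1:ℝ)..1, |u x| ^ (q-1) * u x| ^ (2/q))
        / (∫ x in (-1:ℝ)..1, (u x)^2) :=
    (div_lt_div_iff_of_pos_right hC).mpr (by linarith)
  have hqq : q - 1 = q - 1 := rfl
  linarith [hle, hdiv, hQ.le, hQ.ge]
section AlphaZero

lemma restrict_Ioo_eq_Ioc : (volume : Measure ℝ).restrict (Set.Ioo (-1:ℝ) 1)
    = volume.restrict (Set.Ioc (-1:ℝ) 1) := Measure.restrict_congr_set Ioo_ae_eq_Ioc

lemma sq_intInt_of_memLp {g : ℝ → ℝ} (h : MemLp g 2 (volume.restrict (Set.Ioo (-1:ℝ) 1))) :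
    IntervalIntegrable (fun x => (g x)^2) volume (-1) 1 := by
  rw [intervalIntegrable_iff, Set.uIoc_of_le (by norm_num : (-1:ℝ) ≤ 1)]
  have hsq := h.integrable_sq
  rw [restrict_Ioo_eq_Ioc] at hsq
  exact hsq

lemma mul_intInt_of_memLp {g h : ℝ → ℝ} (hg : MemLp g 2 (volume.restrict (Set.Ioo (-1:ℝ) 1)))
    (hh : MemLp h 2 (volume.restrict (Set.Ioo (-1:ℝ) 1))) :
    IntervalIntegrable (fun x => g x * h x) volume (-1) 1 := by
  rw [intervalIntegrable_iff, Set.uIoc_of_le (by norm_num : (-1:ℝ) ≤ 1)]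
  have hint : Integrable (fun x => (g x)^2/2 + (h x)^2/2)
      (volume.restrict (Set.Ioo (-1:ℝ) 1)) :=
    (hg.integrable_sq.div_const 2).add (hh.integrable_sq.div_const 2)
  have hb : Integrable (fun x => g x * h x) (volume.restrict (Set.Ioo (-1:ℝ) 1)) := by
    apply hint.mono' (hg.aestronglyMeasurable.mul hh.aestronglyMeasurable)
    apply Filter.Eventually.of_forall
    intro x
    simp only [Pi.mul_apply]
    rw [Real.norm_eq_abs, abs_mul]
    nlinarith [abs_nonneg (g x), abs_nonneg (h x), sq_abs (g x), sq_abs (h x),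
      sq_nonneg (|g x| - |h x|)]
  rw [restrict_Ioo_eq_Ioc] at hb
  exact hb

lemma quad_coeff_zero {a b t₀ : ℝ} (ht₀ : 0 < t₀)
    (h : ∀ t : ℝ, |t| ≤ t₀ → 0 ≤ a*t + b*t^2) : a = 0 := by
  by_contra ha
  set ε := min t₀ (|a|/(2*(|b|+1))) with hεdef
  have hεpos : 0 < ε := lt_min ht₀ (by positivity)
  have hε1 : ε ≤ t₀ := min_le_left _ _
  have hε2 : ε ≤ |a|/(2*(|b|+1)) := min_le_right _ _
  have hb1 : (0:ℝ) < |b| + 1 := by positivity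
  have hε3 : ε * (2*(|b|+1)) ≤ |a| := by
    rw [div_eq_mul_inv] at hε2
    calc ε * (2*(|b|+1)) ≤ |a| * (2*(|b|+1))⁻¹ * (2*(|b|+1)) := by
          apply mul_le_mul_of_nonneg_right hε2 (by positivity)
      _ = |a| := by field_simp
  have hbe : |b| * ε ≤ |a| / 2 := by nlinarith [abs_nonneg b]
  have haa : 0 < |a| := abs_pos.mpr ha
  rcases lt_or_gt_of_ne ha with hneg | hpos
  · have h1 := h ε (by rwa [abs_of_pos hεpos])
    have h2 : b*ε^2 ≤ |b| * ε^2 := by nlinarith [le_abs_self b, sq_nonneg ε]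
    have h3 : |a| = -a := abs_of_neg hneg
    nlinarith
  · have h1 := h (-ε) (by rwa [abs_neg, abs_of_pos hεpos])
    have h2 : b*ε^2 ≤ |b| * ε^2 := by nlinarith [le_abs_self b, sq_nonneg ε]
    have h3 : |a| = a := abs_of_pos hpos
    nlinarith

lemma isH10_add {u g w h : ℝ → ℝ} (hu : IsH10 u g) (hw : IsH10 w h) (t : ℝ) :
    IsH10 (fun x => u x + t * w x) (fun x => g x + t * h x) := by
  refine ⟨hu.1.add (hw.1.const_mul t), hu.2.1.add ((hw.2.1.const_mul t)), ?_, ?_⟩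
  · intro x hx
    have h1 : IntervalIntegrable g volume (-1) x :=
      sub_intInt hu.1 (by constructor <;> norm_num) hx
    have h2 : IntervalIntegrable h volume (-1) x :=
      sub_intInt hw.1 (by constructor <;> norm_num) hx
    show u x + t * w x = ∫ s in (-1:ℝ)..x, (g s + t * h s)
    rw [intervalIntegral.integral_add h1 (h2.const_mul t),
      intervalIntegral.integral_const_mul, ← hu.2.2.1 x hx, ← hw.2.2.1 x hx]
  · simp [hu.2.2.2, hw.2.2.2]

lemma expand_sq {f k : ℝ → ℝ} (t : ℝ)
    (hf : IntervalIntegrable (fun x => (f x)^2) volume (-1) 1)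
    (hk : IntervalIntegrable (fun x => (k x)^2) volume (-1) 1)
    (hfk : IntervalIntegrable (fun x => f x * k x) volume (-1) 1) :
    ∫ x in (-1:ℝ)..1, (f x + t * k x)^2
      = (∫ x in (-1:ℝ)..1, (f x)^2) + (2*t) * (∫ x in (-1:ℝ)..1, f x * k x)
        + t^2 * ∫ x in (-1:ℝ)..1, (k x)^2 := by
  have he : ∀ x, (f x + t * k x)^2
      = (f x)^2 + (2*t) * (f x * k x) + t^2 * (k x)^2 := fun x => by ring
  rw [intervalIntegral.integral_congr (g := fun x =>
    (f x)^2 + (2*t) * (f x * k x) + t^2 * (k x)^2) (fun x _ => he x)]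
  rw [intervalIntegral.integral_add (hf.add (hfk.const_mul (2*t))) (hk.const_mul (t^2)),
    intervalIntegral.integral_add hf (hfk.const_mul (2*t)),
    intervalIntegral.integral_const_mul, intervalIntegral.integral_const_mul]

lemma EL {q : ℝ} (hq : q ∈ Set.Icc (1:ℝ) 2) {u g w h : ℝ → ℝ}
    (hmin : IsMinimizer 0 q u g) (hw : IsH10 w h) :
    (∫ x in (-1:ℝ)..1, g x * h x) * (∫ x in (-1:ℝ)..1, (u x)^2)
      = (∫ x in (-1:ℝ)..1, (g x)^2) * (∫ x in (-1:ℝ)..1, u x * w x) := by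
  obtain ⟨h10, hnt, hQ⟩ := hmin
  have hC := denom_pos h10 hnt
  have hcu := contOn h10
  have hcw := contOn hw
  set D := ∫ x in (-1:ℝ)..1, (g x)^2 with hD
  set C := ∫ x in (-1:ℝ)..1, (u x)^2 with hCd
  set B := ∫ x in (-1:ℝ)..1, g x * h x with hB
  set E := ∫ x in (-1:ℝ)..1, u x * w x with hE
  set Dh := ∫ x in (-1:ℝ)..1, (h x)^2 with hDh
  set Cw := ∫ x in (-1:ℝ)..1, (w x)^2 with hCw
  have hg2 := sq_intInt_of_memLp h10.2.1
  have hh2 := sq_intInt_of_memLp hw.2.1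
  have hgh := mul_intInt_of_memLp h10.2.1 hw.2.1
  have hIcc : Set.uIcc (-1:ℝ) 1 = Set.Icc (-1:ℝ) 1 := Set.uIcc_of_le (by norm_num)
  have hu2 : IntervalIntegrable (fun x => (u x)^2) volume (-1) 1 :=
    ((hcu.pow 2).mono hIcc.le).intervalIntegrable
  have hw2 : IntervalIntegrable (fun x => (w x)^2) volume (-1) 1 :=
    ((hcw.pow 2).mono hIcc.le).intervalIntegrable
  have huw : IntervalIntegrable (fun x => u x * w x) volume (-1) 1 :=
    ((hcu.mul hcw).mono hIcc.le).intervalIntegrable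
  have hCw0 : 0 ≤ Cw := intervalIntegral.integral_nonneg (by norm_num) (fun x _ => sq_nonneg _)
  have hDQ : D / C = lam 0 q := by
    rw [← hQ, Qfun]
    norm_num
    rfl
  -- positivity of perturbed denominator for small t
  set t₀ := C / (2*(2 * |E| + Cw + 1)) with ht₀def
  have ht₀ : 0 < t₀ := by positivity
  have hden : ∀ t : ℝ, |t| ≤ t₀ → 0 < C + (2*t)*E + t^2*Cw := by
    intro t ht
    have h1 : (2*t)*E ≥ -(2 * |t| * |E|) := by
      have := neg_abs_le (t*E)
      have habs : |t*E| = |t| * |E| := abs_mul t E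
      nlinarith [neg_abs_le (t*E)]
    have h2 : 0 ≤ t^2*Cw := by positivity
    have h3 : |t| * (2*(2 * |E| + Cw + 1)) ≤ C := by
      have := mul_le_mul_of_nonneg_right ht (by positivity : (0:ℝ) ≤ 2*(2 * |E| + Cw + 1))
      calc |t| * (2*(2 * |E| + Cw + 1)) ≤ t₀ * (2*(2 * |E| + Cw + 1)) := this
        _ = C := by rw [ht₀def]; field_simp
    nlinarith [abs_nonneg t, abs_nonneg E]
  have hkey : ∀ t : ℝ, |t| ≤ t₀ →
      0 ≤ (2*(B*C - D*E))*t + (Dh*C - D*Cw)*t^2 := by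
    intro t ht
    have hdenpos := hden t ht
    have hnum : ∫ x in (-1:ℝ)..1, (g x + t * h x)^2 = D + (2*t)*B + t^2*Dh :=
      expand_sq t hg2 hh2 hgh
    have hd2 : ∫ x in (-1:ℝ)..1, (u x + t * w x)^2 = C + (2*t)*E + t^2*Cw :=
      expand_sq t hu2 hw2 huw
    have h10t := isH10_add h10 hw t
    have hntt : Nontriv (fun x => u x + t * w x) := by
      by_contra hcon
      rw [Nontriv] at hcon
      push_neg at hcon
      have : ∫ x in (-1:ℝ)..1, (u x + t * w x)^2 = 0 := by
        rw [intervalIntegral.integral_congr (g := fun _ => (0:ℝ)) ?_]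
        · simp
        · intro x hx
          rw [hIcc] at hx
          have := hcon x hx
          simp [this]
      rw [hd2] at this
      linarith
    have hle := lam_le_Qfun hq 0 h10t hntt
    rw [Qfun] at hle
    norm_num at hle
    rw [hnum, hd2, ← hDQ] at hle
    rw [div_le_div_iff₀ hC hdenpos] at hle
    nlinarith [hle]
  have := quad_coeff_zero ht₀ hkey
  linarith

lemma exists_uext {u : ℝ → ℝ} (hcu : ContinuousOn u (Set.Icc (-1:ℝ) 1)) :
    ∃ v : ℝ → ℝ, Continuous v ∧ ∀ x ∈ Set.Icc (-1:ℝ) 1, v x = u x := by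
  refine ⟨u ∘ (fun x => max (-1) (min 1 x)), ?_, ?_⟩
  · apply hcu.comp_continuous (continuous_const.max (continuous_const.min continuous_id))
    intro x
    constructor
    · exact le_max_left _ _
    · apply max_le (by norm_num) (min_le_left _ _)
  · intro x hx
    show u (max (-1) (min 1 x)) = u x
    rw [min_eq_right hx.2, max_eq_right hx.1]

lemma fubini_test {u w h v : ℝ → ℝ} (hv : Continuous v)
    (hveq : ∀ x ∈ Set.Icc (-1:ℝ) 1, v x = u x) (hw : IsH10 w h) :
    ∫ x in (-1:ℝ)..1, u x * w x
      = ∫ t in (-1:ℝ)..1, h t * (∫ x in t..(1:ℝ), v x) := by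
  set μ := volume.restrict (Set.Ioc (-1:ℝ) 1) with hμ
  set F : ℝ → ℝ → ℝ := fun x t => v x * ((Set.Iic x).indicator h t) with hF
  have hh1 : IntegrableOn h (Set.Ioc (-1:ℝ) 1) volume := by
    have := hw.1
    rw [intervalIntegrable_iff, Set.uIoc_of_le (by norm_num : (-1:ℝ) ≤ 1)] at this
    exact this
  have hvint : Integrable v μ := hv.integrableOn_Ioc
  -- Step A : LHS = double integral
  have stepA : ∫ x in (-1:ℝ)..1, u x * w x = ∫ x, (∫ t, F x t ∂μ) ∂μ := by
    rw [intervalIntegral.integral_of_le (by norm_num : (-1:ℝ) ≤ 1)]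
    apply setIntegral_congr_fun measurableSet_Ioc
    intro x hx
    have hwx : w x = ∫ t in Set.Ioc (-1:ℝ) x, h t := by
      rw [← intervalIntegral.integral_of_le hx.1.le, ← hw.2.2.1 x ⟨hx.1.le, hx.2⟩]
    have heval : ∫ t, F x t ∂μ = v x * ∫ t in Set.Ioc (-1:ℝ) x, h t := by
      rw [hF]
      simp only []
      rw [integral_const_mul, setIntegral_indicator measurableSet_Iic]
      congr 2
      rw [Set.Ioc_inter_Iic, min_eq_right hx.2]
    show u x * w x = ∫ t, F x t ∂μ
    rw [heval, ← hwx, hveq x ⟨hx.1.le, hx.2⟩]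
  -- integrability on the product
  have hFmeas : Integrable (Function.uncurry F) (μ.prod μ) := by
    have hFeq : Function.uncurry F
        = {p : ℝ × ℝ | p.2 ≤ p.1}.indicator (fun p => v p.1 * h p.2) := by
      funext p
      rcases p with ⟨x, t⟩
      show v x * ((Set.Iic x).indicator h t) = _
      by_cases hle : t ≤ x <;>
        simp [Set.indicator_apply, Set.mem_Iic, Set.mem_setOf_eq, hle]
    rw [hFeq]
    apply Integrable.indicator
    · exact hvint.mul_prod hh1
    · exact (isClosed_le continuous_snd continuous_fst).measurableSet
  have stepB := integral_integral_swap hFmeas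
  -- Step C : inner integral
  have stepC : ∫ t, (∫ x, F x t ∂μ) ∂μ
      = ∫ t in (-1:ℝ)..1, h t * (∫ x in t..(1:ℝ), v x) := by
    rw [intervalIntegral.integral_of_le (by norm_num : (-1:ℝ) ≤ 1)]
    apply setIntegral_congr_fun measurableSet_Ioc
    intro t ht
    have h1 : (fun x => F x t) = fun x => h t * ((Set.Ici t).indicator v x) := by
      funext x
      show v x * ((Set.Iic x).indicator h t) = _
      by_cases hle : t ≤ x <;>
        simp [Set.indicator_apply, Set.mem_Iic, Set.mem_Ici, Set.mem_setOf_eq, hle, mul_comm]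
    show ∫ x, F x t ∂μ = h t * ∫ x in t..(1:ℝ), v x
    rw [h1, integral_const_mul]
    congr 1
    rw [setIntegral_indicator measurableSet_Ici]
    have hset : Set.Ioc (-1:ℝ) 1 ∩ Set.Ici t = Set.Icc t 1 := by
      ext x
      simp only [Set.mem_inter_iff, Set.mem_Ioc, Set.mem_Ici, Set.mem_Icc]
      constructor
      · rintro ⟨⟨_, hx2⟩, hx3⟩; exact ⟨hx3, hx2⟩
      · rintro ⟨hx1, hx2⟩; exact ⟨⟨lt_of_lt_of_le ht.1 hx1, hx2⟩, hx1⟩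
    rw [hset, integral_Icc_eq_integral_Ioc, ← intervalIntegral.integral_of_le ht.2]
  rw [stepA, stepB, stepC]

lemma V_hasDeriv {v : ℝ → ℝ} (hv : Continuous v) (t : ℝ) :
    HasDerivAt (fun t => ∫ x in t..(1:ℝ), v x) (-(v t)) t := by
  have hVeq : (fun t => ∫ x in t..(1:ℝ), v x)
      = fun t => (∫ x in (-1:ℝ)..1, v x) - ∫ x in (-1:ℝ)..t, v x := by
    funext s
    have := intervalIntegral.integral_add_adjacent_intervals
      (hv.intervalIntegrable (μ := volume) (-1) s) (hv.intervalIntegrable (μ := volume) s 1)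
    linarith
  rw [hVeq]
  have hprim : HasDerivAt (fun s => ∫ x in (-1:ℝ)..s, v x) (v t) t :=
    intervalIntegral.integral_hasDerivAt_right (hv.intervalIntegrable (μ := volume) (-1) t)
      (hv.stronglyMeasurableAtFilter _ _) hv.continuousAt
  simpa using (hasDerivAt_const t (∫ x in (-1:ℝ)..1, v x)).fun_sub hprim

lemma V_continuous {v : ℝ → ℝ} (hv : Continuous v) :
    Continuous (fun t => ∫ x in t..(1:ℝ), v x) :=
  continuous_iff_continuousAt.2 fun t => (V_hasDeriv hv t).continuousAt

lemma duBois {q : ℝ} (hq : q ∈ Set.Icc (1:ℝ) 2) {u g v : ℝ → ℝ}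
    (hmin : IsMinimizer 0 q u g) (hv : Continuous v)
    (hveq : ∀ x ∈ Set.Icc (-1:ℝ) 1, v x = u x) :
    ∃ K : ℝ, g =ᵐ[volume.restrict (Set.Ioo (-1:ℝ) 1)]
      (fun t => K + lam 0 q * ∫ x in t..(1:ℝ), v x) := by
  have h10 := hmin.1
  have hnt := hmin.2.1
  have hC := denom_pos h10 hmin.2.1
  have hIcc : Set.uIcc (-1:ℝ) 1 = Set.Icc (-1:ℝ) 1 := Set.uIcc_of_le (by norm_num)
  set lam0 := lam 0 q with hlam0
  set V := fun t => ∫ x in t..(1:ℝ), v x with hVdef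
  have hVc : Continuous V := V_continuous hv
  set G := fun t => g t - lam0 * V t with hGdef
  have hGint : IntervalIntegrable G volume (-1) 1 :=
    h10.1.sub ((hVc.intervalIntegrable (μ := volume) (-1) 1).const_mul lam0)
  set K := (∫ t in (-1:ℝ)..1, G t)/2 with hKdef
  have hGKint : IntervalIntegrable (fun t => G t - K) volume (-1) 1 :=
    hGint.sub intervalIntegrable_const
  set h₀ := (Set.Icc (-1:ℝ) 1).indicator (fun t => G t - K) with hh₀def
  set w₀ := fun x : ℝ => ∫ s in (-1:ℝ)..x, h₀ s with hw₀def
  have hh₀int : IntervalIntegrable h₀ volume (-1) 1 := by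
    rw [intervalIntegrable_iff] at hGKint ⊢
    exact hGKint.indicator measurableSet_Icc
  have hVK_mem : MemLp (fun t => lam0 * V t + K) 2 (volume.restrict (Set.Ioo (-1:ℝ) 1)) := by
    obtain ⟨M, hM⟩ := isCompact_Icc.exists_bound_of_continuousOn
      (hVc.continuousOn : ContinuousOn V (Set.Icc (-1:ℝ) 1))
    haveI : IsFiniteMeasure (volume.restrict (Set.Ioo (-1:ℝ) 1)) := by
      constructor
      rw [Measure.restrict_apply_univ, Real.volume_Ioo]
      exact ENNReal.ofReal_lt_top
    apply MemLp.of_bound (((continuous_const.mul hVc).add continuous_const).aestronglyMeasurable)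
      (|lam0| * M + |K|)
    rw [ae_restrict_iff' measurableSet_Ioo]
    apply Filter.Eventually.of_forall
    intro t ht
    have h1 := hM t ⟨ht.1.le, ht.2.le⟩
    rw [Real.norm_eq_abs] at h1 ⊢
    calc |lam0 * V t + K| ≤ |lam0 * V t| + |K| := abs_add_le _ _
      _ = |lam0| * |V t| + |K| := by rw [abs_mul]
      _ ≤ |lam0| * M + |K| := by nlinarith [abs_nonneg lam0, abs_nonneg (V t)]
  have hGK_mem : MemLp (fun t => G t - K) 2 (volume.restrict (Set.Ioo (-1:ℝ) 1)) := by
    have : (fun t => G t - K) = fun t => g t - (lam0 * V t + K) := by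
      funext t; rw [hGdef]; ring
    rw [this]
    exact h10.2.1.sub hVK_mem
  have hh₀mem : MemLp h₀ 2 (volume.restrict (Set.Ioo (-1:ℝ) 1)) :=
    hGK_mem.indicator measurableSet_Icc
  have hinth₀ : ∫ s in (-1:ℝ)..1, h₀ s = 0 := by
    have hcongr : ∫ s in (-1:ℝ)..1, h₀ s = ∫ s in (-1:ℝ)..1, (G s - K) := by
      apply intervalIntegral.integral_congr
      intro s hs
      rw [hIcc] at hs
      exact Set.indicator_of_mem hs _
    rw [hcongr, intervalIntegral.integral_sub hGint intervalIntegrable_const,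
      intervalIntegral.integral_const, hKdef]
    simp
    ring
  have hw₀10 : IsH10 w₀ h₀ := ⟨hh₀int, hh₀mem, fun x _ => rfl, hinth₀⟩
  -- Euler--Lagrange identity
  have hel := EL hq hmin hw₀10
  have hDQ : (∫ x in (-1:ℝ)..1, (g x)^2) / (∫ x in (-1:ℝ)..1, (u x)^2) = lam0 := by
    rw [hlam0, ← hmin.2.2, Qfun]
    norm_num
  have hB : ∫ x in (-1:ℝ)..1, g x * h₀ x
      = lam0 * ∫ x in (-1:ℝ)..1, u x * w₀ x := by
    have hD : (∫ x in (-1:ℝ)..1, (g x)^2) = lam0 * ∫ x in (-1:ℝ)..1, (u x)^2 := by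
      rw [← hDQ]; field_simp
    have h2 : (∫ x in (-1:ℝ)..1, g x * h₀ x) * (∫ x in (-1:ℝ)..1, (u x)^2)
        = (lam0 * ∫ x in (-1:ℝ)..1, u x * w₀ x) * (∫ x in (-1:ℝ)..1, (u x)^2) := by
      rw [hel, hD]; ring
    exact mul_right_cancel₀ (ne_of_gt hC) h2
  have hfub : ∫ x in (-1:ℝ)..1, u x * w₀ x = ∫ t in (-1:ℝ)..1, h₀ t * V t :=
    fubini_test hv hveq hw₀10
  -- integrability pieces
  have hh₀g : IntervalIntegrable (fun x => h₀ x * g x) volume (-1) 1 :=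
    mul_intInt_of_memLp hh₀mem h10.2.1
  have hh₀V : IntervalIntegrable (fun x => h₀ x * V x) volume (-1) 1 :=
    hh₀int.mul_continuousOn (hVc.continuousOn)
  have hzero : ∫ t in (-1:ℝ)..1, h₀ t * (G t - K) = 0 := by
    have hexp : ∀ t : ℝ, h₀ t * (G t - K)
        = h₀ t * g t - lam0 * (h₀ t * V t) - K * h₀ t := by
      intro t; rw [hGdef]; ring
    rw [intervalIntegral.integral_congr (g := fun t =>
        h₀ t * g t - lam0 * (h₀ t * V t) - K * h₀ t) (fun t _ => hexp t)]
    rw [intervalIntegral.integral_sub (hh₀g.sub (hh₀V.const_mul lam0)) (hh₀int.const_mul K),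
      intervalIntegral.integral_sub hh₀g (hh₀V.const_mul lam0),
      intervalIntegral.integral_const_mul, intervalIntegral.integral_const_mul,
      hinth₀, ← hfub]
    have hgh₀ : ∫ x in (-1:ℝ)..1, h₀ x * g x = ∫ x in (-1:ℝ)..1, g x * h₀ x := by
      apply intervalIntegral.integral_congr; intro x _; ring
    rw [hgh₀, hB]
    ring
  have hsq : ∫ t in (-1:ℝ)..1, (G t - K)^2 = 0 := by
    have hcongr : ∫ t in (-1:ℝ)..1, (G t - K)^2 = ∫ t in (-1:ℝ)..1, h₀ t * (G t - K) := by
      apply intervalIntegral.integral_congr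
      intro t ht
      rw [hIcc] at ht
      show (G t - K)^2 = h₀ t * (G t - K)
      rw [hh₀def, Set.indicator_of_mem ht]
      ring
    rw [hcongr, hzero]
  -- conclude a.e. equality
  have hae : (fun t => (G t - K)^2) =ᵐ[volume.restrict (Set.Ioo (-1:ℝ) 1)] 0 := by
    have hint2 : Integrable (fun t => (G t - K)^2) (volume.restrict (Set.Ioo (-1:ℝ) 1)) :=
      hGK_mem.integrable_sq
    have h0' : ∫ t, (G t - K)^2 ∂(volume.restrict (Set.Ioo (-1:ℝ) 1)) = 0 := by
      rw [restrict_Ioo_eq_Ioc]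
      rw [intervalIntegral.integral_of_le (by norm_num : (-1:ℝ) ≤ 1)] at hsq
      exact hsq
    exact (integral_eq_zero_iff_of_nonneg (fun t => sq_nonneg _) hint2).mp h0'
  refine ⟨K, ?_⟩
  filter_upwards [hae] with t ht
  have : (G t - K)^2 = 0 := ht
  have hGt : G t = K := by nlinarith [sq_nonneg (G t - K)]
  rw [hGdef] at hGt
  simp only [] at hGt
  linarith [hGt]
set_option maxHeartbeats 2000000 in
lemma part1_zero {q : ℝ} (hq : q ∈ Set.Icc (1:ℝ) 2) {u g : ℝ → ℝ}
    (hmin : IsMinimizer 0 q u g) :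
    (∀ x ∈ Set.Icc (-1:ℝ) 1, 0 ≤ u x) ∨ (∀ x ∈ Set.Icc (-1:ℝ) 1, u x ≤ 0) := by
  have h10 := hmin.1
  have hnt := hmin.2.1
  have hC := denom_pos h10 hnt
  have hcu := contOn h10
  obtain ⟨v, hv, hveq⟩ := exists_uext hcu
  obtain ⟨K, hae⟩ := duBois hq hmin hv hveq
  set lam0 := lam 0 q with hlam0
  set V : ℝ → ℝ := fun t => ∫ x in t..(1:ℝ), v x with hVdef
  have hVc : Continuous V := V_continuous hv
  have hVd : ∀ t, HasDerivAt V (-(v t)) t := V_hasDeriv hv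
  -- positivity of lam0
  have hD0 : 0 < ∫ x in (-1:ℝ)..1, (g x)^2 := by
    rcases lt_or_eq_of_le (intervalIntegral.integral_nonneg (by norm_num : (-1:ℝ) ≤ 1)
      (fun x _ => sq_nonneg (g x))) with hlt | heq
    · exact hlt
    · exfalso
      have hint : Integrable (fun x => (g x)^2) (volume.restrict (Set.Ioc (-1:ℝ) 1)) := by
        have := h10.2.1.integrable_sq
        rwa [restrict_Ioo_eq_Ioc] at this
      have h0 : ∫ x in Set.Ioc (-1:ℝ) 1, (g x)^2 = 0 := by
        rw [← intervalIntegral.integral_of_le (by norm_num : (-1:ℝ) ≤ 1), ← heq]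
      have hgz : (fun x => (g x)^2) =ᵐ[volume.restrict (Set.Ioc (-1:ℝ) 1)] 0 :=
        (integral_eq_zero_iff_of_nonneg (fun x => sq_nonneg _) hint).mp h0
      have hgz' : ∀ᵐ t : ℝ ∂volume, t ∈ Set.Ioc (-1:ℝ) 1 → g t = 0 := by
        rw [← ae_restrict_iff' measurableSet_Ioc]
        filter_upwards [hgz] with t ht
        have : (g t)^2 = 0 := ht
        nlinarith [sq_nonneg (g t)]
      obtain ⟨x₀, hx₀, hux₀⟩ := hnt
      apply hux₀
      rw [h10.2.2.1 x₀ hx₀]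
      rw [intervalIntegral.integral_congr_ae (g := fun _ => (0:ℝ)) ?_]
      · simp
      · filter_upwards [hgz'] with t ht htΙ
        rw [Set.uIoc_of_le hx₀.1] at htΙ
        exact ht ⟨htΙ.1, le_trans htΙ.2 hx₀.2⟩
  have hDQ : (∫ x in (-1:ℝ)..1, (g x)^2) / (∫ x in (-1:ℝ)..1, (u x)^2) = lam0 := by
    rw [hlam0, ← hmin.2.2, Qfun]
    norm_num
  have hlampos : 0 < lam0 := by rw [← hDQ]; positivity
  have hlamle : lam0 ≤ π^2/4 := by
    obtain ⟨J, hJ, hline⟩ := lam_le_line hq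
    have := hline 0
    simpa [hlam0] using this
  set ω := Real.sqrt lam0 with hωdef
  have hω0 : 0 < ω := Real.sqrt_pos.2 hlampos
  have hω2 : ω^2 = lam0 := Real.sq_sqrt hlampos.le
  have hωle : ω ≤ π/2 := by
    have h1 : lam0 ≤ (π/2)^2 := by nlinarith
    calc ω ≤ Real.sqrt ((π/2)^2) := Real.sqrt_le_sqrt h1
      _ = π/2 := Real.sqrt_sq (by positivity)
  set K₁ := K + lam0 * V (-1) with hK₁def
  set ψ : ℝ → ℝ := fun x => K*(x+1) + lam0 * ∫ t in (-1:ℝ)..x, V t with hψdef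
  -- u = ψ on Icc
  have hglobal : ∀ᵐ t : ℝ ∂volume, t ∈ Set.Ioo (-1:ℝ) 1 → g t = K + lam0 * V t :=
    (ae_restrict_iff' measurableSet_Ioo).1 hae
  have hne1 : ∀ᵐ t : ℝ ∂volume, t ≠ 1 := by
    rw [MeasureTheory.ae_iff]
    have hset : {t : ℝ | ¬ t ≠ 1} = {1} := by ext t; simp
    rw [hset]
    exact measure_singleton 1
  have huψ : ∀ x ∈ Set.Icc (-1:ℝ) 1, u x = ψ x := by
    intro x hx
    rw [h10.2.2.1 x hx]
    have hcongr : ∫ t in (-1:ℝ)..x, g t = ∫ t in (-1:ℝ)..x, (K + lam0 * V t) := by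
      apply intervalIntegral.integral_congr_ae
      filter_upwards [hglobal, hne1] with t hgt ht1 htΙ
      rw [Set.uIoc_of_le hx.1] at htΙ
      exact hgt ⟨htΙ.1, lt_of_le_of_ne (le_trans htΙ.2 hx.2) ht1⟩
    rw [hcongr, intervalIntegral.integral_add intervalIntegrable_const
      ((hVc.intervalIntegrable (μ := volume) (-1) x).const_mul lam0),
      intervalIntegral.integral_const, intervalIntegral.integral_const_mul, hψdef]
    simp
    ring
  -- derivative of ψ
  have hψd : ∀ x, HasDerivAt ψ (K + lam0 * V x) x := by
    intro x
    have h1 : HasDerivAt (fun x : ℝ => K*(x+1)) K x := by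
      simpa using ((hasDerivAt_id x).add_const 1).const_mul K
    have h2 : HasDerivAt (fun x => ∫ t in (-1:ℝ)..x, V t) (V x) x :=
      intervalIntegral.integral_hasDerivAt_right (hVc.intervalIntegrable (μ := volume) (-1) x)
        (hVc.stronglyMeasurableAtFilter _ _) hVc.continuousAt
    simpa using h1.fun_add (h2.const_mul lam0)
  set φs : ℝ → ℝ := fun x => (K₁/ω) * Real.sin (ω*(x+1)) with hφdef
  set z : ℝ → ℝ := fun x => ψ x - φs x with hzdef
  set Z1 : ℝ → ℝ := fun x => (K + lam0 * V x) - K₁ * Real.cos (ω*(x+1)) with hZ1def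
  have hlin : ∀ x : ℝ, HasDerivAt (fun x : ℝ => ω*(x+1)) ω x := by
    intro x
    simpa using ((hasDerivAt_id x).add_const 1).const_mul ω
  have hzd : ∀ x, HasDerivAt z (Z1 x) x := by
    intro x
    have h1 : HasDerivAt φs ((K₁/ω) * (Real.cos (ω*(x+1)) * ω)) x :=
      ((hlin x).sin).const_mul (K₁/ω)
    have h2 := (hψd x).sub h1
    have he : (K + lam0 * V x) - (K₁/ω) * (Real.cos (ω*(x+1)) * ω) = Z1 x := by
      rw [hZ1def]
      have : (K₁/ω) * (Real.cos (ω*(x+1)) * ω) = K₁ * Real.cos (ω*(x+1)) := by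
        field_simp
      rw [this]
    rw [← he]
    exact h2
  have hZ1d : ∀ x, HasDerivAt Z1 (lam0 * (-(v x)) + K₁ * (Real.sin (ω*(x+1)) * ω)) x := by
    intro x
    have h1 : HasDerivAt (fun x => K + lam0 * V x) (lam0 * (-(v x))) x :=
      ((hVd x).const_mul lam0).const_add K
    have h2 : HasDerivAt (fun x => K₁ * Real.cos (ω*(x+1)))
        (K₁ * (-Real.sin (ω*(x+1)) * ω)) x := ((hlin x).cos).const_mul K₁
    have h3 := h1.fun_sub h2
    refine h3.congr_deriv ?_
    symm
    ring
  set En : ℝ → ℝ := fun x => Z1 x * Z1 x + lam0 * (z x * z x) with hEndef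
  have hEnd : ∀ x, HasDerivAt En
      ((lam0 * (-(v x)) + K₁ * (Real.sin (ω*(x+1)) * ω)) * Z1 x
        + Z1 x * (lam0 * (-(v x)) + K₁ * (Real.sin (ω*(x+1)) * ω))
        + lam0 * (Z1 x * z x + z x * Z1 x)) x := by
    intro x
    exact ((hZ1d x).mul (hZ1d x)).add (((hzd x).mul (hzd x)).const_mul lam0)
  have hEn0 : ∀ x ∈ Set.Icc (-1:ℝ) 1, HasDerivAt En 0 x := by
    intro x hx
    have hvx : v x = ψ x := by rw [hveq x hx, huψ x hx]
    have hωω : ω * ω = lam0 := by nlinarith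
    have hsub : lam0 * (-(v x)) + K₁ * (Real.sin (ω*(x+1)) * ω) = -lam0 * z x := by
      rw [hvx, hzdef, hφdef]
      simp only []
      have hωne : ω ≠ 0 := ne_of_gt hω0
      have h1 : K₁ * (Real.sin (ω*(x+1)) * ω) = lam0 * ((K₁/ω) * Real.sin (ω*(x+1))) := by
        rw [← hωω]
        field_simp
      rw [h1]
      ring
    have := hEnd x
    rw [hsub] at this
    have hzero : (-lam0 * z x) * Z1 x + Z1 x * (-lam0 * z x)
        + lam0 * (Z1 x * z x + z x * Z1 x) = 0 := by ring
    rwa [hzero] at this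
  have hEncont : ContinuousOn En (Set.Icc (-1:ℝ) 1) := by
    apply Continuous.continuousOn
    exact continuous_iff_continuousAt.2 fun x => (hEnd x).continuousAt
  have hEnconst := constant_of_has_deriv_right_zero hEncont
    (fun x hx => (hEn0 x ⟨hx.1, hx.2.le⟩).hasDerivWithinAt)
  have hψm1 : ψ (-1) = 0 := by
    rw [hψdef]
    simp
  have hzm1 : z (-1) = 0 := by
    rw [hzdef, hφdef]
    simp [hψm1]
  have hZ1m1 : Z1 (-1) = 0 := by
    rw [hZ1def, hK₁def]
    simp
  have hEnm1 : En (-1) = 0 := by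
    rw [hEndef]
    simp [hzm1, hZ1m1]
  have hz0 : ∀ x ∈ Set.Icc (-1:ℝ) 1, z x = 0 := by
    intro x hx
    have h1 := hEnconst x hx
    rw [hEnm1] at h1
    have h2 : Z1 x * Z1 x + lam0 * (z x * z x) = 0 := h1
    have hzz : z x * z x ≤ 0 := by nlinarith [mul_self_nonneg (Z1 x)]
    have hzz' := mul_self_nonneg (z x)
    exact mul_self_eq_zero.mp (le_antisymm hzz hzz')
  have husin : ∀ x ∈ Set.Icc (-1:ℝ) 1, u x = (K₁/ω) * Real.sin (ω*(x+1)) := by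
    intro x hx
    have h1 := hz0 x hx
    rw [hzdef] at h1
    simp only [] at h1
    rw [huψ x hx]
    rw [hφdef] at h1
    linarith [h1]
  have hK₁ne : K₁ ≠ 0 := by
    intro hK₁0
    obtain ⟨x₀, hx₀, hux₀⟩ := hnt
    apply hux₀
    rw [husin x₀ hx₀, hK₁0]
    simp
  have hsin2ω : Real.sin (ω*2) = 0 := by
    have h1 := husin 1 (by constructor <;> norm_num)
    rw [h10.2.2.2] at h1
    have h2 : (K₁/ω) ≠ 0 := div_ne_zero hK₁ne (ne_of_gt hω0)
    have h3 : (K₁/ω) * Real.sin (ω*(1+1)) = 0 := h1.symm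
    rcases mul_eq_zero.mp h3 with h | h
    · exact absurd h h2
    · convert h using 2; norm_num
  have hω_eq : ω = π/2 := by
    obtain ⟨n, hn⟩ := Real.sin_eq_zero_iff.mp hsin2ω
    have hπ := Real.pi_pos
    have hub : (n:ℝ) * π ≤ π := by rw [hn]; nlinarith
    have hlb : (0:ℝ) < (n:ℝ) * π := by rw [hn]; nlinarith
    have h1 : (n:ℝ) ≤ 1 := by nlinarith
    have h2 : (0:ℝ) < (n:ℝ) := by nlinarith
    have hn1 : n = 1 := by
      have h3 : (0:ℤ) < n := by exact_mod_cast h2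
      have h4 : n ≤ (1:ℤ) := by exact_mod_cast h1
      omega
    rw [hn1] at hn
    push_cast at hn
    linarith
  have hsin_nonneg : ∀ x ∈ Set.Icc (-1:ℝ) 1, 0 ≤ Real.sin (ω*(x+1)) := by
    intro x hx
    apply Real.sin_nonneg_of_nonneg_of_le_pi
    · rw [hω_eq]; nlinarith [Real.pi_pos, hx.1]
    · rw [hω_eq]; nlinarith [Real.pi_pos, hx.2]
  rcases lt_or_gt_of_ne hK₁ne with hKneg | hKpos
  · right
    intro x hx
    rw [husin x hx]
    have hs := hsin_nonneg x hx
    have hdiv : K₁/ω < 0 := div_neg_of_neg_of_pos hKneg hω0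
    nlinarith
  · left
    intro x hx
    rw [husin x hx]
    have hs := hsin_nonneg x hx
    have hdiv : 0 < K₁/ω := div_pos hKpos hω0
    nlinarith

end AlphaZero

end S9

/-- For `α ≤ 0` the minimizers of `λ(α,q)` do not change sign; moreover
`λ(α,q) → -∞` as `α → -∞`. -/
theorem statement9 (q : ℝ) (hq : q ∈ Set.Icc (1 : ℝ) 2) :
    (∀ α : ℝ, α ≤ 0 → ∀ u g : ℝ → ℝ, IsMinimizer α q u g →
      ((∀ x ∈ Set.Icc (-1 : ℝ) 1, 0 ≤ u x) ∨ (∀ x ∈ Set.Icc (-1 : ℝ) 1, u x ≤ 0))) ∧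
    Tendsto (fun α => lam α q) atBot atBot := by
  constructor
  · intro α hα u g hmin
    rcases lt_or_eq_of_le hα with h | h
    · exact S9.part1_neg hq h hmin
    · subst h
      exact S9.part1_zero hq hmin
  · exact S9.part2 hq
end
end

section
/- For every m ∈ [0,1] and q ∈ [1,2] one has H(m,q) ≥ H(m,1) = π. Moreover H(m,1) = π for every m ∈ [0,1], and if m < 1 and q > 1 then the inequality is strict: H(m,q) > π. Consequently, if q ∈ (1,2] and H(m,q) = π, then necessarily m = 1. -/
open MeasureTheory Real
open scoped ENNReal

noncomputable section

/-- `z(m,q) = (1-m²)/(1+m^q)`. -/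
def zmq (m q : ℝ) : ℝ := (1 - m ^ 2) / (1 + m ^ q)

/-- `H(m,q) = ∫_{-m}^1 (1 - z(m,q)(1-|y|^{q-1}y) - y²)^{-1/2} dy`, computed as a
(possibly infinite) integral of a nonnegative integrand, so that `H(0,2) = +∞`. -/
def Hmq (m q : ℝ) : ℝ≥0∞ :=
  ∫⁻ y in Set.Ioo (-m) (1 : ℝ),
    (ENNReal.ofReal (Real.sqrt (1 - zmq m q * (1 - |y| ^ (q - 1) * y) - y ^ 2)))⁻¹

/- ### Auxiliary lemmas -/

/-- Two-point majorization inequality for the convex function `x ↦ x ^ q` on `[0, ∞)`. -/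
lemma stmt19_maj {q a b c d : ℝ} (hq : 1 ≤ q) (hc : 0 ≤ c) (hca : c ≤ a) (hcb : c ≤ b)
    (hsum : a + b = c + d) : a ^ q + b ^ q ≤ c ^ q + d ^ q := by
  rcases eq_or_lt_of_le (show c ≤ d by nlinarith) with h | hcd
  · have ha : a = c := by nlinarith
    have hb : b = c := by nlinarith
    rw [ha, hb, ← h]
  · set l : ℝ := (d - a) / (d - c) with hl
    have hdc : 0 < d - c := by linarith
    have hl0 : 0 ≤ l := by apply div_nonneg; nlinarith; linarith
    have hl1 : 0 ≤ 1 - l := by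
      have : l ≤ 1 := by rw [hl, div_le_one hdc]; linarith
      linarith
    have hcon := convexOn_rpow hq
    have ha' : a = l * c + (1 - l) * d := by
      have h := div_mul_cancel₀ (d - a) hdc.ne'; rw [← hl] at h; linear_combination h
    have hb' : b = (1 - l) * c + l * d := by
      have h := div_mul_cancel₀ (d - a) hdc.ne'; rw [← hl] at h; linear_combination hsum - h
    have h1 := hcon.2 (Set.mem_Ici.2 hc) (Set.mem_Ici.2 (by linarith : (0:ℝ) ≤ d)) hl0 hl1
      (by ring)
    have h2 := hcon.2 (Set.mem_Ici.2 hc) (Set.mem_Ici.2 (by linarith : (0:ℝ) ≤ d)) hl1 hl0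
      (by ring)
    simp only [smul_eq_mul] at h1 h2
    rw [ha', hb']
    calc (l * c + (1 - l) * d) ^ q + ((1 - l) * c + l * d) ^ q
        ≤ (l * c ^ q + (1 - l) * d ^ q) + ((1 - l) * c ^ q + l * d ^ q) := add_le_add h1 h2
      _ = c ^ q + d ^ q := by ring

/-- Strict two-point majorization inequality. -/
lemma stmt19_maj_strict {q a b c d : ℝ} (hq : 1 < q) (hc : 0 ≤ c) (hca : c < a) (had : a < d)
    (hcb : c ≤ b) (hsum : a + b = c + d) : a ^ q + b ^ q < c ^ q + d ^ q := by
  have hcd : c < d := lt_trans hca had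
  set l : ℝ := (d - a) / (d - c) with hl
  have hdc : 0 < d - c := by linarith
  have hl0 : 0 < l := by apply div_pos; linarith; linarith
  have hl1 : 0 < 1 - l := by
    have : l < 1 := by rw [hl, div_lt_one hdc]; linarith
    linarith
  have hscon := strictConvexOn_rpow hq
  have hcon := hscon.convexOn
  have ha' : a = l * c + (1 - l) * d := by
    have h := div_mul_cancel₀ (d - a) hdc.ne'; rw [← hl] at h; linear_combination h
  have hb' : b = (1 - l) * c + l * d := by
    have h := div_mul_cancel₀ (d - a) hdc.ne'; rw [← hl] at h; linear_combination hsum - h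
  have h1 := hscon.2 (Set.mem_Ici.2 hc) (Set.mem_Ici.2 (by linarith : (0:ℝ) ≤ d)) (ne_of_lt hcd)
    hl0 hl1 (by ring)
  have h2 := hcon.2 (Set.mem_Ici.2 hc) (Set.mem_Ici.2 (by linarith : (0:ℝ) ≤ d)) hl1.le hl0.le
    (by ring)
  simp only [smul_eq_mul] at h1 h2
  rw [ha', hb']
  calc (l * c + (1 - l) * d) ^ q + ((1 - l) * c + l * d) ^ q
      < (l * c ^ q + (1 - l) * d ^ q) + ((1 - l) * c ^ q + l * d ^ q) :=
        add_lt_add_of_lt_of_le h1 h2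
    _ = c ^ q + d ^ q := by ring

lemma stmt19_srepr_nonneg {q t : ℝ} (hq : 1 ≤ q) (ht : 0 ≤ t) : |t| ^ (q - 1) * t = t ^ q := by
  rcases eq_or_lt_of_le ht with h | h
  · rw [← h, abs_zero]
    rw [Real.zero_rpow (by linarith : q ≠ 0), mul_zero]
  · rw [abs_of_pos h]
    nth_rewrite 2 [← Real.rpow_one t]
    rw [← Real.rpow_add h]
    norm_num

lemma stmt19_srepr_neg {q t : ℝ} (hq : 1 ≤ q) (ht : t ≤ 0) : |t| ^ (q - 1) * t = -((-t) ^ q) := by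
  have h := stmt19_srepr_nonneg hq (neg_nonneg.2 ht)
  rw [abs_neg] at h
  linarith [h]

lemma stmt19_rpow_le_self {q x : ℝ} (hq : 1 ≤ q) (h0 : 0 ≤ x) (h1 : x ≤ 1) : x ^ q ≤ x := by
  rcases eq_or_lt_of_le h0 with h | h
  · rw [← h, Real.zero_rpow (by linarith : q ≠ 0)]
  · calc x ^ q ≤ x ^ (1:ℝ) := Real.rpow_le_rpow_of_exponent_ge h h1 hq
      _ = x := Real.rpow_one x

lemma stmt19_rpow_lt_self {q x : ℝ} (hq : 1 < q) (h0 : 0 < x) (h1 : x < 1) : x ^ q < x := by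
  calc x ^ q < x ^ (1:ℝ) := Real.rpow_lt_rpow_of_exponent_gt h0 h1 hq
    _ = x := Real.rpow_one x

lemma stmt19_key_aux {m q u v : ℝ} (hq : 1 ≤ q) (hm0 : 0 ≤ m) (hm1 : m ≤ 1) (huv : u ≤ v)
    (hsum : u + v = 1 - m) (hu : -m ≤ u) (hv : v ≤ 1) :
    |u| ^ (q - 1) * u + |v| ^ (q - 1) * v ≤ 1 - m ^ q := by
  have hq0 : q ≠ 0 := by linarith
  have hv0 : 0 ≤ v := by linarith
  rw [stmt19_srepr_nonneg hq hv0]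
  rcases le_or_gt 0 u with hu0 | hu0
  · rw [stmt19_srepr_nonneg hq hu0]
    have h1 : v ^ q + u ^ q ≤ (0:ℝ) ^ q + (1 - m) ^ q :=
      stmt19_maj hq le_rfl hv0 hu0 (by linarith)
    rw [Real.zero_rpow hq0, zero_add] at h1
    have h2 : (1 - m) ^ q ≤ 1 - m := stmt19_rpow_le_self hq (by linarith) (by linarith)
    have h3 : m ^ q ≤ m := stmt19_rpow_le_self hq hm0 hm1
    linarith
  · rw [stmt19_srepr_neg hq hu0.le]
    have h1 : v ^ q + m ^ q ≤ (-u) ^ q + (1:ℝ) ^ q :=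
      stmt19_maj hq (by linarith) (by linarith) (by linarith) (by linarith)
    rw [Real.one_rpow] at h1
    linarith

lemma stmt19_key_aux_strict {m q u v : ℝ} (hq : 1 < q) (hm0 : 0 ≤ m) (hm1 : m < 1) (huv : u ≤ v)
    (hsum : u + v = 1 - m) (hu : -m < u) (hv : v < 1) :
    |u| ^ (q - 1) * u + |v| ^ (q - 1) * v < 1 - m ^ q := by
  have hq0 : q ≠ 0 := by linarith
  have hv0 : 0 ≤ v := by linarith
  rw [stmt19_srepr_nonneg hq.le hv0]
  rcases lt_trichotomy u 0 with hu0 | hu0 | hu0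
  · rw [stmt19_srepr_neg hq.le hu0.le]
    have h1 : v ^ q + m ^ q < (-u) ^ q + (1:ℝ) ^ q :=
      stmt19_maj_strict hq (by linarith) (by linarith) hv (by linarith) (by linarith)
    rw [Real.one_rpow] at h1
    linarith
  · subst hu0
    have hm0' : 0 < m := by linarith
    have hveq : v = 1 - m := by linarith
    simp only [mul_zero, zero_add]
    have h2 : (1 - m) ^ q ≤ 1 - m := stmt19_rpow_le_self hq.le (by linarith) (by linarith)
    have h3 : m ^ q < m := stmt19_rpow_lt_self hq hm0' hm1
    rw [hveq]
    linarith
  · rw [stmt19_srepr_nonneg hq.le hu0.le]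
    have h1 : v ^ q + u ^ q < (0:ℝ) ^ q + (1 - m) ^ q :=
      stmt19_maj_strict hq le_rfl (by linarith) (by linarith) hu0.le (by linarith)
    rw [Real.zero_rpow hq0, zero_add] at h1
    have h2 : (1 - m) ^ q ≤ 1 - m := stmt19_rpow_le_self hq.le (by linarith) (by linarith)
    have h3 : m ^ q ≤ m := stmt19_rpow_le_self hq.le hm0 hm1.le
    linarith

lemma stmt19_key {m q y : ℝ} (hq : 1 ≤ q) (hm0 : 0 ≤ m) (hm1 : m ≤ 1)
    (hy : y ∈ Set.Icc (-m) 1) :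
    |y| ^ (q - 1) * y + |1 - m - y| ^ (q - 1) * (1 - m - y) ≤ 1 - m ^ q := by
  rcases le_total y (1 - m - y) with h | h
  · exact stmt19_key_aux hq hm0 hm1 h (by ring) hy.1 (by linarith [hy.1])
  · rw [add_comm]
    exact stmt19_key_aux hq hm0 hm1 h (by ring) (by linarith [hy.2]) hy.2

lemma stmt19_key_strict {m q y : ℝ} (hq : 1 < q) (hm0 : 0 ≤ m) (hm1 : m < 1)
    (hy : y ∈ Set.Ioo (-m) 1) :
    |y| ^ (q - 1) * y + |1 - m - y| ^ (q - 1) * (1 - m - y) < 1 - m ^ q := by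
  rcases le_total y (1 - m - y) with h | h
  · exact stmt19_key_aux_strict hq hm0 hm1 h (by ring) hy.1 (by linarith [hy.1])
  · rw [add_comm]
    exact stmt19_key_aux_strict hq hm0 hm1 h (by ring) (by linarith [hy.2]) hy.2

lemma stmt19_Dsum {m q y : ℝ} (hq : 1 ≤ q) (hm0 : 0 ≤ m) (hm1 : m ≤ 1)
    (hy : y ∈ Set.Icc (-m) 1) :
    (1 - zmq m q * (1 - |y| ^ (q - 1) * y) - y ^ 2) +
      (1 - zmq m q * (1 - |1 - m - y| ^ (q - 1) * (1 - m - y)) - (1 - m - y) ^ 2) ≤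
    2 * ((1 - y) * (y + m)) := by
  have hmq0 : 0 ≤ m ^ q := Real.rpow_nonneg hm0 q
  have hden : (0:ℝ) < 1 + m ^ q := by linarith
  have hz : zmq m q * (1 + m ^ q) = 1 - m ^ 2 := by
    rw [zmq, div_mul_cancel₀ _ hden.ne']
  have hz0 : 0 ≤ zmq m q := div_nonneg (by nlinarith) (by linarith)
  have hkey := stmt19_key hq hm0 hm1 hy
  set S1 := |y| ^ (q - 1) * y with hS1
  set S2 := |1 - m - y| ^ (q - 1) * (1 - m - y) with hS2
  have hmono : zmq m q * (1 + m ^ q) ≤ zmq m q * (2 - (S1 + S2)) :=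
    mul_le_mul_of_nonneg_left (by linarith) hz0
  nlinarith [hmono, hz]

lemma stmt19_Dsum_strict {m q y : ℝ} (hq : 1 < q) (hm0 : 0 ≤ m) (hm1 : m < 1)
    (hy : y ∈ Set.Ioo (-m) 1) :
    (1 - zmq m q * (1 - |y| ^ (q - 1) * y) - y ^ 2) +
      (1 - zmq m q * (1 - |1 - m - y| ^ (q - 1) * (1 - m - y)) - (1 - m - y) ^ 2) <
    2 * ((1 - y) * (y + m)) := by
  have hmq0 : 0 ≤ m ^ q := Real.rpow_nonneg hm0 q
  have hden : (0:ℝ) < 1 + m ^ q := by linarith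
  have hz : zmq m q * (1 + m ^ q) = 1 - m ^ 2 := by
    rw [zmq, div_mul_cancel₀ _ hden.ne']
  have hz0 : 0 < zmq m q := div_pos (by nlinarith) (by linarith)
  have hkey := stmt19_key_strict hq hm0 hm1 hy
  set S1 := |y| ^ (q - 1) * y with hS1
  set S2 := |1 - m - y| ^ (q - 1) * (1 - m - y) with hS2
  have hmono : zmq m q * (1 + m ^ q) < zmq m q * (2 - (S1 + S2)) :=
    mul_lt_mul_of_pos_left (by linarith) hz0
  nlinarith [hmono, hz]

lemma stmt19_real_core {a b c : ℝ} (ha : 0 < a) (hb : 0 < b) (hc : 0 < c) (h : a + b ≤ 2 * c) :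
    2 * (Real.sqrt c)⁻¹ ≤ (Real.sqrt a)⁻¹ + (Real.sqrt b)⁻¹ := by
  set u := Real.sqrt a with hu
  set v := Real.sqrt b with hv
  set w := Real.sqrt c with hw
  have hu0 : 0 < u := Real.sqrt_pos.2 ha
  have hv0 : 0 < v := Real.sqrt_pos.2 hb
  have hw0 : 0 < w := Real.sqrt_pos.2 hc
  have hua : u ^ 2 = a := Real.sq_sqrt ha.le
  have hvb : v ^ 2 = b := Real.sq_sqrt hb.le
  have hwc : w ^ 2 = c := Real.sq_sqrt hc.le
  rw [inv_eq_one_div, inv_eq_one_div, inv_eq_one_div, div_add_div _ _ hu0.ne' hv0.ne',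
    mul_one_div, div_le_div_iff₀ hw0 (mul_pos hu0 hv0)]
  nlinarith [sq_nonneg (u - v), sq_nonneg (u + v), mul_pos hu0 hv0, mul_pos (mul_pos hu0 hv0) hw0,
    sq_nonneg (u * v - w * w), sq_nonneg (u * w - v * w), sq_nonneg (u * v), sq_nonneg w,
    mul_pos hu0 hw0, mul_pos hv0 hw0, sq_nonneg (u * v - u * w), sq_nonneg (u * v - v * w),
    sq_nonneg ((v + u) * w - 2 * (u * v)), sq_nonneg ((v + u) * w + 2 * (u * v))]

lemma stmt19_ptwise {a b c : ℝ} (hc : 0 < c) (h : a + b ≤ 2 * c) :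
    2 * (ENNReal.ofReal (Real.sqrt c))⁻¹ ≤
      (ENNReal.ofReal (Real.sqrt a))⁻¹ + (ENNReal.ofReal (Real.sqrt b))⁻¹ := by
  rcases le_or_gt a 0 with ha | ha
  · rw [Real.sqrt_eq_zero'.mpr ha]
    simp
  rcases le_or_gt b 0 with hb | hb
  · rw [Real.sqrt_eq_zero'.mpr hb]
    simp
  · have sa : 0 < Real.sqrt a := Real.sqrt_pos.2 ha
    have sb : 0 < Real.sqrt b := Real.sqrt_pos.2 hb
    have sc : 0 < Real.sqrt c := Real.sqrt_pos.2 hc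
    rw [← ENNReal.ofReal_inv_of_pos sa, ← ENNReal.ofReal_inv_of_pos sb,
      ← ENNReal.ofReal_inv_of_pos sc, ← ENNReal.ofReal_add (by positivity) (by positivity),
      show (2:ℝ≥0∞) = ENNReal.ofReal 2 by norm_num,
      ← ENNReal.ofReal_mul (by norm_num)]
    exact ENNReal.ofReal_le_ofReal (stmt19_real_core ha hb hc h)

lemma stmt19_ptwise_strict {a b c : ℝ} (hc : 0 < c) (h : a + b < 2 * c) :
    2 * (ENNReal.ofReal (Real.sqrt c))⁻¹ <
      (ENNReal.ofReal (Real.sqrt a))⁻¹ + (ENNReal.ofReal (Real.sqrt b))⁻¹ := by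
  have sc : 0 < Real.sqrt c := Real.sqrt_pos.2 hc
  have hfin : 2 * (ENNReal.ofReal (Real.sqrt c))⁻¹ < ⊤ := by
    apply ENNReal.mul_lt_top ENNReal.ofNat_lt_top
    rw [ENNReal.inv_lt_top]
    exact ENNReal.ofReal_pos.2 sc
  rcases le_or_gt a 0 with ha | ha
  · rw [Real.sqrt_eq_zero'.mpr ha]
    simpa using hfin
  rcases le_or_gt b 0 with hb | hb
  · rw [Real.sqrt_eq_zero'.mpr hb]
    simpa using hfin
  · have hmid : 0 < (a + b) / 2 := by linarith
    calc 2 * (ENNReal.ofReal (Real.sqrt c))⁻¹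
        < 2 * (ENNReal.ofReal (Real.sqrt ((a + b) / 2)))⁻¹ := by
          rw [ENNReal.mul_lt_mul_iff_right (by norm_num) (by norm_num), ENNReal.inv_lt_inv]
          rw [ENNReal.ofReal_lt_ofReal_iff sc]
          exact Real.sqrt_lt_sqrt hmid.le (by linarith)
      _ ≤ _ := stmt19_ptwise hmid (by linarith)

/-- One-dimensional change of variables for lower Lebesgue integrals. -/
lemma stmt19_lintegral_image {s : Set ℝ} {f f' : ℝ → ℝ}
    (hs : MeasurableSet s) (hf' : ∀ x ∈ s, HasDerivWithinAt f (f' x) s x)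
    (hf : Set.InjOn f s) (g : ℝ → ℝ≥0∞) :
    ∫⁻ x in f '' s, g x = ∫⁻ x in s, ENNReal.ofReal |f' x| * g (f x) := by
  simpa only [ContinuousLinearMap.det_toSpanSingleton] using
    lintegral_image_eq_lintegral_abs_det_fderiv_mul volume hs
      (fun x hx => (hf' x hx).hasFDerivWithinAt) hf g

/-- The base integral: `∫_{-m}^1 dy/√((1-y)(y+m)) = π`. -/
lemma stmt19_base (m : ℝ) (hm0 : 0 ≤ m) :
    ∫⁻ y in Set.Ioo (-m) (1:ℝ), (ENNReal.ofReal (Real.sqrt ((1 - y) * (y + m))))⁻¹ =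
      ENNReal.ofReal π := by
  have hm1 : (0:ℝ) < (1 + m) / 2 := by linarith
  set f : ℝ → ℝ := fun θ => (1 - m) / 2 + (1 + m) / 2 * Real.sin θ with hf
  have himg : f '' Set.Ioo (-(π/2)) (π/2) = Set.Ioo (-m) (1:ℝ) := by
    ext y
    constructor
    · rintro ⟨θ, hθ, rfl⟩
      have h1 : Real.sin θ < 1 := by
        have := Real.strictMonoOn_sin ⟨hθ.1.le, hθ.2.le⟩
          ⟨by linarith [Real.pi_pos], le_refl (π/2)⟩ hθ.2
        rwa [Real.sin_pi_div_two] at this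
      have h2 : -1 < Real.sin θ := by
        have := Real.strictMonoOn_sin ⟨le_refl (-(π/2)), by linarith [Real.pi_pos]⟩
          ⟨hθ.1.le, hθ.2.le⟩ hθ.1
        rwa [Real.sin_neg, Real.sin_pi_div_two] at this
      constructor
      · simp only [hf]; nlinarith
      · simp only [hf]; nlinarith
    · intro hy
      set u : ℝ := (2 * y - (1 - m)) / (1 + m) with hu
      have hu1 : u < 1 := by rw [hu, div_lt_one (by linarith)]; linarith [hy.2]
      have hu2 : -1 < u := by rw [hu, lt_div_iff₀ (by linarith)]; linarith [hy.1]
      refine ⟨Real.arcsin u, ⟨?_, ?_⟩, ?_⟩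
      · exact Real.neg_pi_div_two_lt_arcsin.2 hu2
      · exact Real.arcsin_lt_pi_div_two.2 hu1
      · rw [hf]
        simp only
        rw [Real.sin_arcsin hu2.le hu1.le, hu]
        field_simp
        ring
  have hderiv : ∀ θ ∈ Set.Ioo (-(π/2)) (π/2),
      HasDerivWithinAt f ((1 + m) / 2 * Real.cos θ) (Set.Ioo (-(π/2)) (π/2)) θ := by
    intro θ _
    exact (((Real.hasDerivAt_sin θ).const_mul ((1 + m) / 2)).const_add
      ((1 - m) / 2)).hasDerivWithinAt
  have hinj : Set.InjOn f (Set.Ioo (-(π/2)) (π/2)) := by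
    intro a ha b hb hab
    have : Real.sin a = Real.sin b := by
      have h := hab
      simp only [hf] at h
      exact mul_left_cancel₀ (ne_of_gt hm1)
        (by linarith : (1+m)/2 * Real.sin a = (1+m)/2 * Real.sin b)
    exact Real.injOn_sin ⟨ha.1.le, ha.2.le⟩ ⟨hb.1.le, hb.2.le⟩ this
  rw [← himg, stmt19_lintegral_image measurableSet_Ioo hderiv hinj]
  have hcongr : ∀ θ ∈ Set.Ioo (-(π/2)) (π/2),
      ENNReal.ofReal |(1 + m) / 2 * Real.cos θ| *
        (ENNReal.ofReal (Real.sqrt ((1 - f θ) * (f θ + m))))⁻¹ = 1 := by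
    intro θ hθ
    have hcos : 0 < Real.cos θ := Real.cos_pos_of_mem_Ioo hθ
    have hval : (1 - f θ) * (f θ + m) = ((1 + m) / 2 * Real.cos θ) ^ 2 := by
      have hsc := Real.sin_sq_add_cos_sq θ
      simp only [hf]
      linear_combination (-((1 + m) / 2) ^ 2) * hsc
    rw [hval, Real.sqrt_sq (by positivity), abs_of_pos (by positivity)]
    exact ENNReal.mul_inv_cancel (ENNReal.ofReal_pos.2 (by positivity)).ne' ENNReal.ofReal_ne_top
  rw [setLIntegral_congr_fun measurableSet_Ioo hcongr]
  simp only [lintegral_one, Measure.restrict_apply MeasurableSet.univ, Set.univ_inter,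
    Real.volume_Ioo]
  congr 1
  linarith

/-- `H(m,q) ≥ H(m,1) = π` for all `m ∈ [0,1]`, `q ∈ [1,2]`, with strict inequality when
`m < 1` and `q > 1`; hence for `q ∈ (1,2]`, `H(m,q) = π` forces `m = 1`. -/
theorem statement19 (m q : ℝ) (hm : m ∈ Set.Icc (0 : ℝ) 1) (hq : q ∈ Set.Icc (1 : ℝ) 2) :
    Hmq m 1 = ENNReal.ofReal π ∧
    Hmq m 1 ≤ Hmq m q ∧
    (m < 1 → 1 < q → ENNReal.ofReal π < Hmq m q) ∧
    (1 < q → Hmq m q = ENNReal.ofReal π → m = 1) := by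
  obtain ⟨hm0, hm1⟩ := hm
  obtain ⟨hq1, _hq2⟩ := hq
  have hm' : (0:ℝ) < 1 + m := by linarith
  set F : ℝ → ℝ≥0∞ := fun y =>
    (ENNReal.ofReal (Real.sqrt (1 - zmq m q * (1 - |y| ^ (q - 1) * y) - y ^ 2)))⁻¹ with hF
  set G : ℝ → ℝ≥0∞ := fun y => (ENNReal.ofReal (Real.sqrt ((1 - y) * (y + m))))⁻¹ with hG
  -- Part 1 : `H(m,1) = π`
  have part1 : Hmq m 1 = ENNReal.ofReal π := by
    have heq : ∀ y : ℝ,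
        1 - zmq m 1 * (1 - |y| ^ ((1:ℝ) - 1) * y) - y ^ 2 = (1 - y) * (y + m) := by
      intro y
      rw [zmq, Real.rpow_one, show ((1:ℝ) - 1) = 0 by norm_num, Real.rpow_zero, one_mul]
      field_simp
      ring
    unfold Hmq
    simp_rw [heq]
    exact stmt19_base m hm0
  -- Measurability
  have hFmeas : Measurable F := by
    apply Measurable.inv
    apply ENNReal.measurable_ofReal.comp
    apply Continuous.measurable
    apply Real.continuous_sqrt.comp
    exact (continuous_const.sub (continuous_const.mul (continuous_const.sub
      (((Real.continuous_rpow_const (by linarith : (0:ℝ) ≤ q - 1)).comp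
        continuous_abs).mul continuous_id)))).sub (continuous_pow 2)
  have hGmeas : Measurable G := by
    apply Measurable.inv
    apply ENNReal.measurable_ofReal.comp
    apply Continuous.measurable
    apply Real.continuous_sqrt.comp
    exact (continuous_const.sub continuous_id).mul (continuous_id.add continuous_const)
  -- Reflection invariance
  have himg : (fun x : ℝ => 1 - m - x) '' Set.Ioo (-m) 1 = Set.Ioo (-m) 1 := by
    rw [Set.image_const_sub_Ioo]
    congr 1 <;> ring
  have hder : ∀ x ∈ Set.Ioo (-m) (1:ℝ),
      HasDerivWithinAt (fun x : ℝ => 1 - m - x) (-1 : ℝ) (Set.Ioo (-m) 1) x := by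
    intro x _
    simpa using ((hasDerivAt_id x).const_sub (1 - m)).hasDerivWithinAt
  have hrefl : ∫⁻ y in Set.Ioo (-m) 1, F y = ∫⁻ y in Set.Ioo (-m) 1, F (1 - m - y) := by
    conv_lhs => rw [← himg]
    rw [stmt19_lintegral_image measurableSet_Ioo hder
      (fun a _ b _ h => by linarith)]
    simp
  have hsum_int : ∫⁻ y in Set.Ioo (-m) 1, (F y + F (1 - m - y)) = 2 * Hmq m q := by
    rw [lintegral_add_left hFmeas, ← hrefl, ← two_mul]
    rfl
  have hGint : ∫⁻ y in Set.Ioo (-m) 1, 2 * G y = 2 * ENNReal.ofReal π := by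
    rw [lintegral_const_mul 2 hGmeas]
    rw [hG]
    simp_rw [stmt19_base m hm0]
  -- Part 2 : monotonicity
  have hle : ∫⁻ y in Set.Ioo (-m) 1, 2 * G y ≤
      ∫⁻ y in Set.Ioo (-m) 1, (F y + F (1 - m - y)) := by
    apply setLIntegral_mono (hFmeas.add (hFmeas.comp (measurable_const.sub measurable_id)))
    intro y hy
    have hD1 : 0 < (1 - y) * (y + m) := mul_pos (by linarith [hy.2]) (by linarith [hy.1])
    simp only [hF, hG]
    exact stmt19_ptwise hD1 (stmt19_Dsum hq1 hm0 hm1 ⟨hy.1.le, hy.2.le⟩)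
  have part2 : Hmq m 1 ≤ Hmq m q := by
    rw [part1]
    have h2 : 2 * ENNReal.ofReal π ≤ 2 * Hmq m q := by
      calc 2 * ENNReal.ofReal π = ∫⁻ y in Set.Ioo (-m) 1, 2 * G y := hGint.symm
        _ ≤ ∫⁻ y in Set.Ioo (-m) 1, (F y + F (1 - m - y)) := hle
        _ = 2 * Hmq m q := hsum_int
    exact (ENNReal.mul_le_mul_iff_right (by norm_num) (by norm_num)).1 h2
  -- Part 3 : strict
  have part3 : m < 1 → 1 < q → ENNReal.ofReal π < Hmq m q := by
    intro hmlt hqlt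
    have hvol : volume (Set.Ioo (-m) (1:ℝ)) ≠ 0 := by
      rw [Real.volume_Ioo]
      simp only [ne_eq, ENNReal.ofReal_eq_zero, not_le]
      linarith
    have hstrict : ∫⁻ y in Set.Ioo (-m) 1, 2 * G y <
        ∫⁻ y in Set.Ioo (-m) 1, (F y + F (1 - m - y)) := by
      apply setLIntegral_strict_mono measurableSet_Ioo hvol
        (hFmeas.add (hFmeas.comp (measurable_const.sub measurable_id)))
        (by rw [hGint]; exact ENNReal.mul_ne_top (by norm_num) ENNReal.ofReal_ne_top)
      apply ae_of_all
      intro y hy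
      have hD1 : 0 < (1 - y) * (y + m) := mul_pos (by linarith [hy.2]) (by linarith [hy.1])
      simp only [hF, hG]
      exact stmt19_ptwise_strict hD1 (stmt19_Dsum_strict hqlt hm0 hmlt hy)
    have h2 : 2 * ENNReal.ofReal π < 2 * Hmq m q := by
      calc 2 * ENNReal.ofReal π = ∫⁻ y in Set.Ioo (-m) 1, 2 * G y := hGint.symm
        _ < ∫⁻ y in Set.Ioo (-m) 1, (F y + F (1 - m - y)) := hstrict
        _ = 2 * Hmq m q := hsum_int
    exact (ENNReal.mul_lt_mul_iff_right (by norm_num) (by norm_num)).1 h2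
  refine ⟨part1, part2, part3, ?_⟩
  intro hq' hH
  by_contra hne
  have hmlt : m < 1 := lt_of_le_of_ne hm1 hne
  have := part3 hmlt hq'
  rw [hH] at this
  exact lt_irrefl _ this
end
end
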